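/- arXiv:2512.05024 — 3 statements merged into one kernel-verified Lean document; each statement's English description precedes it below -/
import Mathlib

section
/- Let X_1,…,X_n be i.i.d. from the density p_θ of a one-parameter canonical exponential family, and let T̄_n = (1/n)·Σ_{i=1}^n T(X_i). For each attainable value t of T̄_n, let θ_t be the unique canonical parameter with μ(θ_t) = t. Then for any ε > 0, ℙ( D(p_{θ_{T̄_n}} ‖ p_θ) > ε ) ≤ 2·e^{−nε}. -/
open MeasureTheory Real

/-- Log-partition function `A(θ) = log ∫ e^{θ·T(x)} h(x) dν(x)` of a one-parameter canonical
exponential family. -/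
noncomputable def expFamA {X : Type*} [MeasurableSpace X] (ν : Measure X)
    (T h : X → ℝ) (θ : ℝ) : ℝ :=
  Real.log (∫ x, Real.exp (θ * T x) * h x ∂ν)

/-- Density `p_θ(x) = exp(θ·T(x) − A(θ))·h(x)` of the one-parameter canonical exponential
family with respect to the base measure `ν`. -/
noncomputable def expFamPdf {X : Type*} [MeasurableSpace X] (ν : Measure X)
    (T h : X → ℝ) (θ : ℝ) (x : X) : ℝ :=
  Real.exp (θ * T x - expFamA ν T h θ) * h x

/-- Mean map `μ(θ) = E_θ[T(X)] = ∫ T(x)·p_θ(x) dν(x)`. -/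
noncomputable def expFamMean {X : Type*} [MeasurableSpace X] (ν : Measure X)
    (T h : X → ℝ) (θ : ℝ) : ℝ :=
  ∫ x, T x * expFamPdf ν T h θ x ∂ν

/-- Kullback–Leibler divergence `D(p_{θ₁} ‖ p_{θ₂}) = ∫ log(p_{θ₁}/p_{θ₂})·p_{θ₁} dν`. -/
noncomputable def expFamKL {X : Type*} [MeasurableSpace X] (ν : Measure X)
    (T h : X → ℝ) (θ₁ θ₂ : ℝ) : ℝ :=
  ∫ x, Real.log (expFamPdf ν T h θ₁ x / expFamPdf ν T h θ₂ x) * expFamPdf ν T h θ₁ x ∂ν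

open ProbabilityTheory

open scoped ENNReal NNReal

section Aux

variable {X : Type*} [MeasurableSpace X] {ν : Measure X} {T h : X → ℝ}

lemma expFamPdf_nonneg (hh0 : ∀ x, 0 ≤ h x) (η : ℝ) (x : X) : 0 ≤ expFamPdf ν T h η x :=
  mul_nonneg (Real.exp_nonneg _) (hh0 x)

lemma expFamPdf_measurable (hT : Measurable T) (hh : Measurable h) (η : ℝ) :
    Measurable (expFamPdf ν T h η) :=
  (((hT.const_mul η).sub measurable_const).exp).mul hh

lemma expFamPdf_eq (η : ℝ) (x : X) :
    expFamPdf ν T h η x = Real.exp (-(expFamA ν T h η)) * (Real.exp (η * T x) * h x) := by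
  unfold expFamPdf
  rw [sub_eq_add_neg, Real.exp_add]; ring

lemma integral_mul_expFamPdf (η : ℝ) (f : X → ℝ) :
    ∫ x, f x * expFamPdf ν T h η x ∂ν
      = Real.exp (-(expFamA ν T h η)) * ∫ x, f x * (Real.exp (η * T x) * h x) ∂ν := by
  rw [← integral_const_mul]
  congr 1; funext x; rw [expFamPdf_eq]; ring

lemma integrable_expFamPdf (η : ℝ)
    (hint : Integrable (fun x => Real.exp (η * T x) * h x) ν) :
    Integrable (expFamPdf ν T h η) ν := by
  have := hint.const_mul (Real.exp (-(expFamA ν T h η)))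
  exact this.congr (ae_of_all _ fun x => (expFamPdf_eq η x).symm)

lemma integral_expFamPdf (η : ℝ)
    (hpos : 0 < ∫ x, Real.exp (η * T x) * h x ∂ν) :
    ∫ x, expFamPdf ν T h η x ∂ν = 1 := by
  have h1 := integral_mul_expFamPdf (ν := ν) (T := T) (h := h) η (fun _ => 1)
  simp only [one_mul] at h1
  rw [h1, expFamA, Real.exp_neg, Real.exp_log hpos, inv_mul_cancel₀ hpos.ne']

lemma integral_exp_mul_expFamPdf (θ lam : ℝ)
    (hpos : 0 < ∫ x, Real.exp ((θ + lam) * T x) * h x ∂ν) :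
    ∫ x, Real.exp (lam * T x) * expFamPdf ν T h θ x ∂ν
      = Real.exp (expFamA ν T h (θ + lam) - expFamA ν T h θ) := by
  rw [integral_mul_expFamPdf]
  have heq : ∀ x, Real.exp (lam * T x) * (Real.exp (θ * T x) * h x)
      = Real.exp ((θ + lam) * T x) * h x := by
    intro x
    rw [← mul_assoc, ← Real.exp_add]
    ring_nf
  rw [show (fun x => Real.exp (lam * T x) * (Real.exp (θ * T x) * h x))
      = (fun x => Real.exp ((θ + lam) * T x) * h x) from funext heq]
  rw [Real.exp_sub, Real.exp_neg]
  rw [show Real.exp (expFamA ν T h (θ + lam)) = ∫ x, Real.exp ((θ + lam) * T x) * h x ∂ν from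
    Real.exp_log hpos]
  rw [div_eq_mul_inv]; ring

/-- integrability of `T·e^{ηT}h` from integrability at `η ± δ`. -/
lemma integrable_T_mul_exp (hT : Measurable T) (hh : Measurable h) (hh0 : ∀ x, 0 ≤ h x)
    {η δ : ℝ} (hδ : 0 < δ)
    (h1 : Integrable (fun x => Real.exp ((η + δ) * T x) * h x) ν)
    (h2 : Integrable (fun x => Real.exp ((η - δ) * T x) * h x) ν) :
    Integrable (fun x => T x * (Real.exp (η * T x) * h x)) ν := by
  have hg : Integrable
      (fun x => δ⁻¹ * (Real.exp ((η + δ) * T x) * h x + Real.exp ((η - δ) * T x) * h x)) ν :=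
    (h1.add h2).const_mul _
  refine hg.mono' ?_ (ae_of_all _ fun x => ?_)
  · exact (hT.mul (((hT.const_mul η).exp).mul hh)).aestronglyMeasurable
  · have key : δ * |T x| ≤ Real.exp (δ * T x) + Real.exp (-(δ * T x)) := by
      rcases le_total 0 (T x) with hx | hx
      · have : δ * |T x| ≤ Real.exp (δ * T x) := by
          rw [abs_of_nonneg hx]
          calc δ * T x ≤ δ * T x + 1 := by linarith
          _ ≤ _ := Real.add_one_le_exp _
        linarith [Real.exp_nonneg (-(δ * T x)), this]
      · have : δ * |T x| ≤ Real.exp (-(δ * T x)) := by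
          rw [abs_of_nonpos hx]
          calc δ * -T x ≤ δ * -T x + 1 := by linarith
          _ ≤ _ := by rw [show δ * -T x = -(δ * T x) by ring]; exact Real.add_one_le_exp _
        linarith [Real.exp_nonneg (δ * T x), this]
    have hTb : |T x| ≤ δ⁻¹ * (Real.exp (δ * T x) + Real.exp (-(δ * T x))) := by
      rw [le_inv_mul_iff₀ hδ]
      exact key
    have hnn : 0 ≤ Real.exp (η * T x) * h x := mul_nonneg (Real.exp_nonneg _) (hh0 x)
    calc ‖T x * (Real.exp (η * T x) * h x)‖
        = |T x| * (Real.exp (η * T x) * h x) := by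
          rw [Real.norm_eq_abs, abs_mul, abs_of_nonneg hnn]
      _ ≤ δ⁻¹ * (Real.exp (δ * T x) + Real.exp (-(δ * T x))) * (Real.exp (η * T x) * h x) := by
          exact mul_le_mul_of_nonneg_right hTb hnn
      _ = δ⁻¹ * (Real.exp ((η + δ) * T x) * h x + Real.exp ((η - δ) * T x) * h x) := by
          rw [show (η + δ) * T x = η * T x + δ * T x by ring,
            show (η - δ) * T x = η * T x + -(δ * T x) by ring, Real.exp_add, Real.exp_add]
          ring

lemma expFamKL_eq (hh0 : ∀ x, 0 ≤ h x) (θ₁ θ₂ : ℝ)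
    (hpos1 : 0 < ∫ x, Real.exp (θ₁ * T x) * h x ∂ν)
    (hint1 : Integrable (fun x => Real.exp (θ₁ * T x) * h x) ν)
    (hintT : Integrable (fun x => T x * expFamPdf ν T h θ₁ x) ν) :
    expFamKL ν T h θ₁ θ₂
      = (θ₁ - θ₂) * expFamMean ν T h θ₁ - expFamA ν T h θ₁ + expFamA ν T h θ₂ := by
  have hptw : ∀ x, Real.log (expFamPdf ν T h θ₁ x / expFamPdf ν T h θ₂ x) * expFamPdf ν T h θ₁ x
      = (θ₁ - θ₂) * (T x * expFamPdf ν T h θ₁ x)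
        + (expFamA ν T h θ₂ - expFamA ν T h θ₁) * expFamPdf ν T h θ₁ x := by
    intro x
    rcases eq_or_lt_of_le (hh0 x) with hx | hx
    · simp [expFamPdf, ← hx]
    · have hx' : h x ≠ 0 := ne_of_gt hx
      have : expFamPdf ν T h θ₁ x / expFamPdf ν T h θ₂ x
          = Real.exp ((θ₁ * T x - expFamA ν T h θ₁) - (θ₂ * T x - expFamA ν T h θ₂)) := by
        unfold expFamPdf
        rw [mul_div_mul_right _ _ hx', ← Real.exp_sub]
      rw [this, Real.log_exp]
      ring
  unfold expFamKL
  rw [show (fun x => Real.log (expFamPdf ν T h θ₁ x / expFamPdf ν T h θ₂ x) * expFamPdf ν T h θ₁ x)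
      = (fun x => (θ₁ - θ₂) * (T x * expFamPdf ν T h θ₁ x)
        + (expFamA ν T h θ₂ - expFamA ν T h θ₁) * expFamPdf ν T h θ₁ x) from funext hptw]
  rw [integral_add (hintT.const_mul _) ((integrable_expFamPdf θ₁ hint1).const_mul _),
    integral_const_mul, integral_const_mul, integral_expFamPdf θ₁ hpos1]
  rw [expFamMean]
  ring

lemma expFamMean_strictMonoOn {ΘS : Set ℝ}
    (hmean : ∀ θ' ∈ ΘS, HasDerivAt (expFamA ν T h) (expFamMean ν T h θ') θ')
    (hconv : StrictConvexOn ℝ ΘS (expFamA ν T h)) :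
    StrictMonoOn (expFamMean ν T h) ΘS := by
  have hd : ∀ x ∈ ΘS, DifferentiableAt ℝ (expFamA ν T h) x :=
    fun x hx => (hmean x hx).differentiableAt
  have hm := hconv.strictMonoOn_deriv hd
  intro a ha b hb hab
  have ea : deriv (expFamA ν T h) a = expFamMean ν T h a := (hmean a ha).deriv
  have eb : deriv (expFamA ν T h) b = expFamMean ν T h b := (hmean b hb).deriv
  rw [← ea, ← eb]
  exact hm ha hb hab

-- reflection lemmas
lemma expFamA_neg (η : ℝ) : expFamA ν (fun x => -T x) h η = expFamA ν T h (-η) := by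
  unfold expFamA
  congr 1
  congr 1
  funext x
  rw [mul_neg, neg_mul]

lemma expFamPdf_neg (η : ℝ) (x : X) :
    expFamPdf ν (fun x => -T x) h η x = expFamPdf ν T h (-η) x := by
  unfold expFamPdf
  rw [expFamA_neg, mul_neg, neg_mul]

lemma expFamMean_neg (η : ℝ) :
    expFamMean ν (fun x => -T x) h η = -expFamMean ν T h (-η) := by
  unfold expFamMean
  rw [← integral_neg]
  congr 1
  funext x
  rw [expFamPdf_neg]
  ring

lemma expFamKL_neg (η₁ η₂ : ℝ) :
    expFamKL ν (fun x => -T x) h η₁ η₂ = expFamKL ν T h (-η₁) (-η₂) := by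
  unfold expFamKL
  congr 1
  funext x
  rw [expFamPdf_neg, expFamPdf_neg]

end Aux

section Push

variable {X : Type*} [MeasurableSpace X] {ν : Measure X} {T h : X → ℝ}
variable {Ω : Type*} [MeasurableSpace Ω] {μ : Measure Ω}

lemma integrable_exp_lam_map (hT : Measurable T) (hh : Measurable h) (hh0 : ∀ x, 0 ≤ h x)
    {θ lam : ℝ} {f : Ω → X} (hf : Measurable f)
    (hlaw : μ.map f = ν.withDensity fun x => ENNReal.ofReal (expFamPdf ν T h θ x))
    (hintl : Integrable (fun x => Real.exp ((θ + lam) * T x) * h x) ν) :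
    Integrable (fun ω => Real.exp (lam * T (f ω))) μ := by
  have hpm : Measurable fun x => (expFamPdf ν T h θ x).toNNReal :=
    (expFamPdf_measurable hT hh θ).real_toNNReal
  have hd : (fun x => ENNReal.ofReal (expFamPdf ν T h θ x))
      = fun x => ((expFamPdf ν T h θ x).toNNReal : ℝ≥0∞) := rfl
  have h1 : Integrable (fun x => Real.exp (lam * T x)) (μ.map f) := by
    rw [hlaw, hd, integrable_withDensity_iff_integrable_smul hpm]
    have h2 : Integrable
        (fun x => Real.exp (-(expFamA ν T h θ)) * (Real.exp ((θ + lam) * T x) * h x)) ν :=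
      hintl.const_mul _
    refine h2.congr (ae_of_all _ fun x => ?_)
    beta_reduce
    rw [NNReal.smul_def, Real.coe_toNNReal _ (expFamPdf_nonneg hh0 θ x), smul_eq_mul, expFamPdf_eq,
      show (θ + lam) * T x = θ * T x + lam * T x by ring, Real.exp_add]
    ring
  exact (integrable_map_measure (((hT.const_mul lam).exp).aestronglyMeasurable)
    hf.aemeasurable).mp h1

lemma mgf_eq_exp (hT : Measurable T) (hh : Measurable h) (hh0 : ∀ x, 0 ≤ h x)
    {θ lam : ℝ} {f : Ω → X} (hf : Measurable f)
    (hlaw : μ.map f = ν.withDensity fun x => ENNReal.ofReal (expFamPdf ν T h θ x))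
    (hpos : 0 < ∫ x, Real.exp ((θ + lam) * T x) * h x ∂ν) :
    mgf (fun ω => T (f ω)) μ lam
      = Real.exp (expFamA ν T h (θ + lam) - expFamA ν T h θ) := by
  have hpm : Measurable fun x => (expFamPdf ν T h θ x).toNNReal :=
    (expFamPdf_measurable hT hh θ).real_toNNReal
  have hd : (fun x => ENNReal.ofReal (expFamPdf ν T h θ x))
      = fun x => ((expFamPdf ν T h θ x).toNNReal : ℝ≥0∞) := rfl
  have h0 : mgf (fun ω => T (f ω)) μ lam = ∫ x, Real.exp (lam * T x) ∂(μ.map f) := by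
    rw [mgf, integral_map hf.aemeasurable (((hT.const_mul lam).exp).aestronglyMeasurable)]
  rw [h0, hlaw, hd, integral_withDensity_eq_integral_smul hpm]
  rw [show (fun x => (expFamPdf ν T h θ x).toNNReal • Real.exp (lam * T x))
      = fun x => Real.exp (lam * T x) * expFamPdf ν T h θ x from funext fun x => by
        rw [NNReal.smul_def, Real.coe_toNNReal _ (expFamPdf_nonneg hh0 θ x), smul_eq_mul]; ring]
  exact integral_exp_mul_expFamPdf θ lam hpos

end Push

theorem expFam_chernoff_half
    {X : Type*} [MeasurableSpace X] (ν : Measure X) [SigmaFinite ν]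
    (T h : X → ℝ) (hT : Measurable T) (hh : Measurable h) (hh0 : ∀ x, 0 ≤ h x)
    (ΘS : Set ℝ) (hΘopen : IsOpen ΘS)
    (hint : ∀ θ' ∈ ΘS, Integrable (fun x => Real.exp (θ' * T x) * h x) ν)
    (hpos : ∀ θ' ∈ ΘS, 0 < ∫ x, Real.exp (θ' * T x) * h x ∂ν)
    (hmean : ∀ θ' ∈ ΘS, HasDerivAt (expFamA ν T h) (expFamMean ν T h θ') θ')
    (hconv : StrictConvexOn ℝ ΘS (expFamA ν T h))
    (θ : ℝ) (hθ : θ ∈ ΘS)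
    {Ω : Type*} [MeasurableSpace Ω] (μ : Measure Ω) [IsProbabilityMeasure μ]
    (n : ℕ) (hn : 0 < n) (Xs : Fin n → Ω → X) (hXsmeas : ∀ i, Measurable (Xs i))
    (hiid : iIndepFun Xs μ)
    (hlaw : ∀ i, μ.map (Xs i) = ν.withDensity (fun x => ENNReal.ofReal (expFamPdf ν T h θ x)))
    (θof : ℝ → ℝ)
    (hθof : ∀ ω, θof ((∑ i, T (Xs i ω)) / n) ∈ ΘS ∧
      expFamMean ν T h (θof ((∑ i, T (Xs i ω)) / n)) = (∑ i, T (Xs i ω)) / n)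
    (ε : ℝ) (hε : 0 < ε) :
    μ ({ω | ε < expFamKL ν T h (θof ((∑ i, T (Xs i ω)) / n)) θ} ∩
        {ω | θ ≤ θof ((∑ i, T (Xs i ω)) / n)}) ≤
      ENNReal.ofReal (Real.exp (-(n : ℝ) * ε)) := by
  classical
  set Sb : Ω → ℝ := fun ω => (∑ i, T (Xs i ω)) / n with hSb
  set θs : Ω → ℝ := fun ω => θof (Sb ω) with hθs
  have hθsΘ : ∀ ω, θs ω ∈ ΘS := fun ω => (hθof ω).1
  have hmθs : ∀ ω, expFamMean ν T h (θs ω) = Sb ω := fun ω => (hθof ω).2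
  have hmono : StrictMonoOn (expFamMean ν T h) ΘS := expFamMean_strictMonoOn hmean hconv
  have hintT : ∀ η ∈ ΘS, Integrable (fun x => T x * expFamPdf ν T h η x) ν := by
    intro η hη
    obtain ⟨δ, hδ, hball⟩ := Metric.isOpen_iff.mp hΘopen η hη
    have hmem : ∀ s : ℝ, |s| < δ → η + s ∈ ΘS := by
      intro s hs
      apply hball
      rw [Metric.mem_ball, Real.dist_eq, add_sub_cancel_left]
      exact hs
    have hδ2 : 0 < δ / 2 := by linarith
    have h1 := hint (η + δ / 2) (hmem (δ / 2) (by rw [abs_of_pos hδ2]; linarith))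
    have h2' := hint (η + -(δ / 2)) (hmem (-(δ / 2)) (by rw [abs_neg, abs_of_pos hδ2]; linarith))
    have h2 : Integrable (fun x => Real.exp ((η - δ / 2) * T x) * h x) ν := by
      simpa [sub_eq_add_neg] using h2'
    have hbase := integrable_T_mul_exp hT hh hh0 hδ2 h1 h2
    refine (hbase.const_mul (Real.exp (-(expFamA ν T h η)))).congr (ae_of_all _ fun x => ?_)
    simp only [expFamPdf_eq]; ring
  have hKL : ∀ ω, expFamKL ν T h (θs ω) θ
      = (θs ω - θ) * Sb ω - expFamA ν T h (θs ω) + expFamA ν T h θ := by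
    intro ω
    rw [expFamKL_eq hh0 (θs ω) θ (hpos _ (hθsΘ ω)) (hint _ (hθsΘ ω)) (hintT _ (hθsΘ ω)), hmθs]
  set E := {ω | ε < expFamKL ν T h (θs ω) θ} ∩ {ω | θ ≤ θs ω} with hE
  rcases Set.eq_empty_or_nonempty E with hEe | ⟨ω₁, hω₁⟩
  · rw [hEe]; simp
  have hBne : (Sb '' E).Nonempty := ⟨Sb ω₁, ω₁, hω₁, rfl⟩
  have hBbdd : BddBelow (Sb '' E) := by
    refine ⟨expFamMean ν T h θ, ?_⟩
    rintro t ⟨ω, hω, rfl⟩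
    rw [← hmθs ω]
    rcases eq_or_lt_of_le (show θ ≤ θs ω from hω.2) with hq | hq
    · rw [hq]
    · exact (hmono hθ (hθsΘ ω) hq).le
  set tinf := sInf (Sb '' E) with htinf
  set lam₁ := θs ω₁ - θ with hlam₁
  have hlam₁0 : 0 ≤ lam₁ := sub_nonneg.mpr (show θ ≤ θs ω₁ from hω₁.2)
  have key : ∀ δ : ℝ, 0 < δ →
      μ E ≤ ENNReal.ofReal (Real.exp (-(n : ℝ) * ε + n * lam₁ * δ)) := by
    intro δ hδ
    obtain ⟨t₂, ht₂B, ht₂⟩ := exists_lt_of_csInf_lt hBne (lt_add_of_pos_right tinf hδ)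
    obtain ⟨ω₂', hω₂', hSω₂'⟩ := ht₂B
    obtain ⟨ω₂, hω₂E, hSle, hSlt⟩ : ∃ ω₂, ω₂ ∈ E ∧ Sb ω₂ ≤ Sb ω₁ ∧ Sb ω₂ < tinf + δ := by
      rcases le_total (Sb ω₂') (Sb ω₁) with hcase | hcase
      · exact ⟨ω₂', hω₂', hcase, by rw [hSω₂']; exact ht₂⟩
      · refine ⟨ω₁, hω₁, le_refl _, ?_⟩
        calc Sb ω₁ ≤ Sb ω₂' := hcase
          _ < tinf + δ := by rw [hSω₂']; exact ht₂
    set lam := θs ω₂ - θ with hlam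
    have hθlam : θ + lam = θs ω₂ := by rw [hlam]; ring
    have hlam0 : 0 ≤ lam := sub_nonneg.mpr (show θ ≤ θs ω₂ from hω₂E.2)
    have hlamle : lam ≤ lam₁ := by
      have hle : θs ω₂ ≤ θs ω₁ := by
        by_contra hcon
        push_neg at hcon
        have := hmono (hθsΘ ω₁) (hθsΘ ω₂) hcon
        rw [hmθs, hmθs] at this
        exact absurd this (not_lt.mpr hSle)
      exact sub_le_sub_right hle θ
    have hKL₂ : ε < lam * Sb ω₂ - (expFamA ν T h (θ + lam) - expFamA ν T h θ) := by
      have h1 := hω₂E.1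
      rw [Set.mem_setOf_eq, hKL ω₂] at h1
      rw [hθlam, hlam]; linarith
    have hlampos : 0 < lam := by
      rcases eq_or_lt_of_le hlam0 with hq | hq
      · exfalso
        rw [← hq] at hKL₂
        simp at hKL₂
        linarith
      · exact hq
    set Λ := expFamA ν T h (θ + lam) - expFamA ν T h θ with hΛ
    set c := (ε - lam₁ * δ + Λ) / lam with hc
    have hlc : lam * c = ε - lam₁ * δ + Λ := by rw [hc]; field_simp
    have hEsub : E ⊆ {ω | (n : ℝ) * c ≤ ∑ i, T (Xs i ω)} := by
      intro ω hω
      have h1 : tinf ≤ Sb ω := csInf_le hBbdd ⟨ω, hω, rfl⟩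
      have h2 : Sb ω₂ - δ < Sb ω := by linarith
      have h4 : ε + Λ - lam₁ * δ < lam * Sb ω := by
        nlinarith [mul_le_mul_of_nonneg_right hlamle hδ.le]
      have h5 : c ≤ Sb ω := by
        rw [← mul_le_mul_iff_right₀ hlampos, hlc]
        linarith
      have h6 : (n : ℝ) * c ≤ (n : ℝ) * Sb ω :=
        mul_le_mul_of_nonneg_left h5 (Nat.cast_nonneg n)
      have hn' : (n : ℝ) ≠ 0 := Nat.cast_ne_zero.mpr hn.ne'
      rw [Set.mem_setOf_eq]
      calc (n : ℝ) * c ≤ (n : ℝ) * Sb ω := h6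
        _ = ∑ i, T (Xs i ω) := by rw [hSb]; field_simp
    have hθlamΘ : θ + lam ∈ ΘS := by rw [hθlam]; exact hθsΘ ω₂
    have hintl := hint (θ + lam) hθlamΘ
    have hposl := hpos (θ + lam) hθlamΘ
    have hint_i : ∀ i, Integrable (fun ω => Real.exp (lam * T (Xs i ω))) μ :=
      fun i => integrable_exp_lam_map hT hh hh0 (hXsmeas i) (hlaw i) hintl
    have hmgf_i : ∀ i : Fin n, mgf (fun ω => T (Xs i ω)) μ lam = Real.exp Λ :=
      fun i => mgf_eq_exp hT hh hh0 (hXsmeas i) (hlaw i) hposl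
    have hTmeas : ∀ i : Fin n, Measurable fun ω => T (Xs i ω) := fun i => hT.comp (hXsmeas i)
    have hiidT : iIndepFun (fun i => fun ω => T (Xs i ω)) μ :=
      hiid.comp (fun _ => T) (fun _ => hT)
    have hsum_eq : (∑ i : Fin n, fun ω => T (Xs i ω)) = fun ω => ∑ i, T (Xs i ω) := by
      funext ω; simp [Finset.sum_apply]
    have hSint : Integrable (fun ω => Real.exp (lam * ∑ i, T (Xs i ω))) μ := by
      have hq := hiidT.integrable_exp_mul_sum hTmeas (s := Finset.univ) (fun i _ => hint_i i)
      rwa [hsum_eq] at hq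
    have hmgfS : mgf (fun ω => ∑ i, T (Xs i ω)) μ lam = Real.exp Λ ^ n := by
      have hq := hiidT.mgf_sum (t := lam) hTmeas Finset.univ
      rw [hsum_eq] at hq
      rw [hq]
      simp [hmgf_i]
    have hchern := measure_ge_le_exp_mul_mgf (μ := μ)
      (X := fun ω => ∑ i, T (Xs i ω)) ((n : ℝ) * c) hlam0 hSint
    rw [hmgfS] at hchern
    have hbnd : Real.exp (-lam * ((n : ℝ) * c)) * Real.exp Λ ^ n
        = Real.exp (-(n : ℝ) * ε + n * lam₁ * δ) := by
      rw [← Real.exp_nat_mul, ← Real.exp_add]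
      congr 1
      linear_combination (-(n : ℝ)) * hlc
    calc μ E ≤ μ {ω | (n : ℝ) * c ≤ ∑ i, T (Xs i ω)} := measure_mono hEsub
      _ = ENNReal.ofReal ((μ {ω | (n : ℝ) * c ≤ ∑ i, T (Xs i ω)}).toReal) :=
          (ENNReal.ofReal_toReal (measure_ne_top _ _)).symm
      _ ≤ ENNReal.ofReal (Real.exp (-(n : ℝ) * ε + n * lam₁ * δ)) := by
          apply ENNReal.ofReal_le_ofReal
          rw [← hbnd]; exact hchern
  have htend : Filter.Tendsto
      (fun δ : ℝ => ENNReal.ofReal (Real.exp (-(n : ℝ) * ε + n * lam₁ * δ)))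
      (nhdsWithin 0 (Set.Ioi 0)) (nhds (ENNReal.ofReal (Real.exp (-(n : ℝ) * ε)))) := by
    have hcont : Continuous fun δ : ℝ =>
        ENNReal.ofReal (Real.exp (-(n : ℝ) * ε + n * lam₁ * δ)) := by
      apply ENNReal.continuous_ofReal.comp
      apply Real.continuous_exp.comp
      continuity
    have hq := hcont.tendsto 0
    simp only [mul_zero, add_zero] at hq
    exact hq.mono_left nhdsWithin_le_nhds
  refine ge_of_tendsto htend ?_
  filter_upwards [self_mem_nhdsWithin] with δ hδ
  exact key δ hδ

/-- **Chernoff–Hoeffding bound for one-parameter exponential families.**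
Let `X_1,…,X_n` be i.i.d. from the density `p_θ` of a one-parameter canonical exponential
family, `T̄_n = (1/n)·Σ_i T(X_i)`, and for each attainable value `t` of `T̄_n` let `θ_t` be
the unique canonical parameter with `μ(θ_t) = t`.  Then for any `ε > 0`,
`ℙ(D(p_{θ_{T̄_n}} ‖ p_θ) > ε) ≤ 2·e^{−nε}`. -/
theorem expFam_chernoff_hoeffding
    {X : Type*} [MeasurableSpace X] (ν : Measure X) [SigmaFinite ν]
    (T h : X → ℝ) (hT : Measurable T) (hh : Measurable h) (hh0 : ∀ x, 0 ≤ h x)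
    -- the parameter set is an open interval
    (ΘS : Set ℝ) (hΘopen : IsOpen ΘS) (hΘconn : ΘS.OrdConnected)
    -- the log-partition function is finite on the parameter set
    (hint : ∀ θ' ∈ ΘS, Integrable (fun x => Real.exp (θ' * T x) * h x) ν)
    (hpos : ∀ θ' ∈ ΘS, 0 < ∫ x, Real.exp (θ' * T x) * h x ∂ν)
    -- `A` is differentiable with `A'(θ) = μ(θ) = E_θ[T(X)]`, and strictly convex (`A'' > 0`)
    (hmean : ∀ θ' ∈ ΘS, HasDerivAt (expFamA ν T h) (expFamMean ν T h θ') θ')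
    (hconv : StrictConvexOn ℝ ΘS (expFamA ν T h))
    -- the true parameter
    (θ : ℝ) (hθ : θ ∈ ΘS)
    -- i.i.d. samples from `p_θ`
    {Ω : Type*} [MeasurableSpace Ω] (μ : Measure Ω) [IsProbabilityMeasure μ]
    (n : ℕ) (hn : 0 < n) (Xs : Fin n → Ω → X) (hXsmeas : ∀ i, Measurable (Xs i))
    (hiid : iIndepFun Xs μ)
    (hlaw : ∀ i, μ.map (Xs i) =
      ν.withDensity (fun x => ENNReal.ofReal (expFamPdf ν T h θ x)))
    -- every realized value of `T̄_n` is attainable, with canonical parameter `θof (T̄_n)`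
    (θof : ℝ → ℝ)
    (hθof : ∀ ω, θof ((∑ i, T (Xs i ω)) / n) ∈ ΘS ∧
      expFamMean ν T h (θof ((∑ i, T (Xs i ω)) / n)) = (∑ i, T (Xs i ω)) / n) :
    ∀ ε > (0 : ℝ),
      μ {ω | ε < expFamKL ν T h (θof ((∑ i, T (Xs i ω)) / n)) θ} ≤
        ENNReal.ofReal (2 * Real.exp (-(n : ℝ) * ε)) := by
  intro ε hε
  have h₁ := expFam_chernoff_half ν T h hT hh hh0 ΘS hΘopen hint hpos hmean hconv θ hθ
    μ n hn Xs hXsmeas hiid hlaw θof hθof ε hε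
  -- the reflected family `T' = -T`, `θ' = -θ`
  have hfe : ∀ θ' : ℝ,
      (fun x => Real.exp (θ' * -T x) * h x) = (fun x => Real.exp (-θ' * T x) * h x) := by
    intro θ'; funext x; rw [mul_neg, neg_mul]
  have hAeq : expFamA ν (fun x => -T x) h = fun y => expFamA ν T h (-y) :=
    funext fun η => expFamA_neg η
  have hopen' : IsOpen ((fun x : ℝ => -x) ⁻¹' ΘS) := hΘopen.preimage continuous_neg
  have hint' : ∀ θ' ∈ (fun x : ℝ => -x) ⁻¹' ΘS,
      Integrable (fun x => Real.exp (θ' * -T x) * h x) ν := by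
    intro θ' hθ'
    rw [hfe θ']
    exact hint (-θ') hθ'
  have hpos' : ∀ θ' ∈ (fun x : ℝ => -x) ⁻¹' ΘS,
      0 < ∫ x, Real.exp (θ' * -T x) * h x ∂ν := by
    intro θ' hθ'
    rw [hfe θ']
    exact hpos (-θ') hθ'
  have hmean' : ∀ θ' ∈ (fun x : ℝ => -x) ⁻¹' ΘS,
      HasDerivAt (expFamA ν (fun x => -T x) h) (expFamMean ν (fun x => -T x) h θ') θ' := by
    intro θ' hθ'
    have hD : HasDerivAt (fun y : ℝ => expFamA ν T h (-y))
        (expFamMean ν T h (-θ') * (-1)) θ' :=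
      (hmean (-θ') hθ').comp θ' (hasDerivAt_neg θ')
    have hmeq : expFamMean ν (fun x => -T x) h θ' = expFamMean ν T h (-θ') * (-1) := by
      rw [expFamMean_neg]; ring
    rw [hAeq, hmeq]
    exact hD
  have hconv' : StrictConvexOn ℝ ((fun x : ℝ => -x) ⁻¹' ΘS)
      (expFamA ν (fun x => -T x) h) := by
    rw [hAeq]
    constructor
    · intro x hx y hy a b ha hb hab
      have hmem := hconv.1 hx hy ha hb hab
      show -(a • x + b • y) ∈ ΘS
      have : -(a • x + b • y) = a • (-x) + b • (-y) := by
        simp only [smul_eq_mul]; ring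
      rw [this]
      exact hmem
    · intro x hx y hy hxy a b ha hb hab
      have hne : (-x : ℝ) ≠ -y := fun hq => hxy (neg_injective hq)
      have hlt := hconv.2 hx hy hne ha hb hab
      have harg : -(a • x + b • y) = a • (-x) + b • (-y) := by
        simp only [smul_eq_mul]; ring
      show expFamA ν T h (-(a • x + b • y)) < a • expFamA ν T h (-x) + b • expFamA ν T h (-y)
      rw [harg]
      exact hlt
  have hθneg : -θ ∈ (fun x : ℝ => -x) ⁻¹' ΘS := by
    show -(-θ) ∈ ΘS
    rw [neg_neg]; exact hθ
  have hlaw' : ∀ i, μ.map (Xs i) =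
      ν.withDensity (fun x => ENNReal.ofReal (expFamPdf ν (fun x => -T x) h (-θ) x)) := by
    intro i
    rw [hlaw i]
    congr 1
    funext x
    rw [expFamPdf_neg, neg_neg]
  have harg : ∀ ω, (∑ i, -T (Xs i ω)) / (n : ℝ) = -((∑ i, T (Xs i ω)) / n) := by
    intro ω
    rw [Finset.sum_neg_distrib, neg_div]
  have hθof' : ∀ ω, (fun t => -θof (-t)) ((∑ i, -T (Xs i ω)) / n) ∈ (fun x : ℝ => -x) ⁻¹' ΘS ∧
      expFamMean ν (fun x => -T x) h ((fun t => -θof (-t)) ((∑ i, -T (Xs i ω)) / n))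
        = (∑ i, -T (Xs i ω)) / n := by
    intro ω
    constructor
    · show -(-θof (-((∑ i, -T (Xs i ω)) / (n : ℝ)))) ∈ ΘS
      rw [neg_neg, harg ω, neg_neg]
      exact (hθof ω).1
    · show expFamMean ν (fun x => -T x) h (-θof (-((∑ i, -T (Xs i ω)) / (n : ℝ))))
        = (∑ i, -T (Xs i ω)) / n
      rw [harg ω, neg_neg, expFamMean_neg, neg_neg, (hθof ω).2]
  have h₂ := expFam_chernoff_half ν (fun x => -T x) h hT.neg hh hh0
    ((fun x : ℝ => -x) ⁻¹' ΘS) hopen' hint' hpos' hmean' hconv' (-θ) hθneg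
    μ n hn Xs hXsmeas hiid hlaw' (fun t => -θof (-t)) hθof' ε hε
  -- rewrite the reflected event
  have hEeq : ({ω | ε < expFamKL ν (fun x => -T x) h
        ((fun t => -θof (-t)) ((∑ i, -T (Xs i ω)) / n)) (-θ)} ∩
      {ω | -θ ≤ (fun t => -θof (-t)) ((∑ i, -T (Xs i ω)) / n)})
      = ({ω | ε < expFamKL ν T h (θof ((∑ i, T (Xs i ω)) / n)) θ} ∩
        {ω | θof ((∑ i, T (Xs i ω)) / n) ≤ θ}) := by
    ext ω
    simp only [Set.mem_inter_iff, Set.mem_setOf_eq, harg ω, neg_neg, expFamKL_neg,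
      neg_le_neg_iff]
  rw [hEeq] at h₂
  -- combine
  have hsub : {ω | ε < expFamKL ν T h (θof ((∑ i, T (Xs i ω)) / n)) θ} ⊆
      ({ω | ε < expFamKL ν T h (θof ((∑ i, T (Xs i ω)) / n)) θ} ∩
        {ω | θ ≤ θof ((∑ i, T (Xs i ω)) / n)}) ∪
      ({ω | ε < expFamKL ν T h (θof ((∑ i, T (Xs i ω)) / n)) θ} ∩
        {ω | θof ((∑ i, T (Xs i ω)) / n) ≤ θ}) := by
    intro ω hω
    rcases le_total θ (θof ((∑ i, T (Xs i ω)) / n)) with hc | hc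
    · exact Or.inl ⟨hω, hc⟩
    · exact Or.inr ⟨hω, hc⟩
  calc μ {ω | ε < expFamKL ν T h (θof ((∑ i, T (Xs i ω)) / n)) θ}
      ≤ μ (({ω | ε < expFamKL ν T h (θof ((∑ i, T (Xs i ω)) / n)) θ} ∩
          {ω | θ ≤ θof ((∑ i, T (Xs i ω)) / n)}) ∪
        ({ω | ε < expFamKL ν T h (θof ((∑ i, T (Xs i ω)) / n)) θ} ∩
          {ω | θof ((∑ i, T (Xs i ω)) / n) ≤ θ})) := measure_mono hsub
    _ ≤ μ ({ω | ε < expFamKL ν T h (θof ((∑ i, T (Xs i ω)) / n)) θ} ∩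
          {ω | θ ≤ θof ((∑ i, T (Xs i ω)) / n)})
        + μ ({ω | ε < expFamKL ν T h (θof ((∑ i, T (Xs i ω)) / n)) θ} ∩
          {ω | θof ((∑ i, T (Xs i ω)) / n) ≤ θ}) := measure_union_le _ _
    _ ≤ ENNReal.ofReal (Real.exp (-(n : ℝ) * ε)) + ENNReal.ofReal (Real.exp (-(n : ℝ) * ε)) :=
        add_le_add h₁ h₂
    _ = ENNReal.ofReal (2 * Real.exp (-(n : ℝ) * ε)) := by
        rw [← ENNReal.ofReal_add (Real.exp_nonneg _) (Real.exp_nonneg _), two_mul]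
end

section
/- Let X_1,…,X_n be i.i.d. Bernoulli random variables with mean p ∈ (0,1) and empirical mean p̂ = (1/n)·Σ_{i=1}^n X_i. For any γ ∈ (0,1), the confidence set C(p̂) = { u ∈ [0,1] : KL(p̂ ‖ u) ≤ (1/n)·log(2/(1−γ)) } satisfies ℙ( p ∈ C(p̂) ) ≥ γ. -/
open MeasureTheory ProbabilityTheory Real

/-- Real-valued Bernoulli KL divergence `KL(x ‖ p)` (arguments reversed: `klR p x`). -/
noncomputable def klR (p x : ℝ) : ℝ :=
  x * Real.log (x / p) + (1 - x) * Real.log ((1 - x) / (1 - p))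

lemma klR_symm (p x : ℝ) : klR (1 - p) (1 - x) = klR p x := by
  unfold klR
  ring_nf

lemma klR_self (p : ℝ) (hp : p ∈ Set.Ioo (0:ℝ) 1) : klR p p = 0 := by
  unfold klR
  have h1 : p ≠ 0 := ne_of_gt hp.1
  have h2 : (1:ℝ) - p ≠ 0 := by have := hp.2; intro hh; linarith
  rw [div_self h1, div_self h2]
  simp

lemma bern_count {n : ℕ} {Ω : Type*} (X : Fin n → Ω → ℝ)
    (hX01 : ∀ i ω, X i ω = 0 ∨ X i ω = 1) (ω : Ω) :
    ∃ k : ℕ, k ≤ n ∧ (∑ i, X i ω) = (k : ℝ) := by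
  classical
  refine ⟨(Finset.univ.filter (fun i => X i ω = 1)).card,
    le_trans (Finset.card_filter_le _ _) (by simp), ?_⟩
  rw [Finset.card_filter]
  push_cast
  apply Finset.sum_congr rfl
  intro i _
  rcases hX01 i ω with h | h <;> simp [h]

lemma bern_mgf {Ω : Type*} [MeasurableSpace Ω] (μ : Measure Ω) [IsProbabilityMeasure μ]
    (p : ℝ) (hp0 : 0 ≤ p) (Z : Ω → ℝ) (hmeas : Measurable Z)
    (h01 : ∀ ω, Z ω = 0 ∨ Z ω = 1)
    (hlaw : μ {ω | Z ω = 1} = ENNReal.ofReal p) (t : ℝ) :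
    Integrable (fun ω => Real.exp (t * Z ω)) μ ∧
      mgf Z μ t = 1 - p + p * Real.exp t := by
  have hA : MeasurableSet {ω | Z ω = 1} := hmeas (measurableSet_singleton 1)
  have hZind : Z = Set.indicator {ω | Z ω = 1} (fun _ => (1:ℝ)) := by
    funext ω
    rcases h01 ω with h | h <;> simp [Set.indicator_apply, Set.mem_setOf_eq, h]
  have hZint : Integrable Z μ := by
    rw [hZind]; exact (integrable_const 1).indicator hA
  have hZmean : ∫ ω, Z ω ∂μ = p := by
    rw [hZind, integral_indicator_const (1:ℝ) hA, measureReal_def, hlaw, smul_eq_mul, mul_one,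
      ENNReal.toReal_ofReal hp0]
  have hexp_eq : ∀ ω, Real.exp (t * Z ω) = 1 + (Real.exp t - 1) * Z ω := by
    intro ω
    rcases h01 ω with h | h <;> simp [h]
  have hint2 : Integrable (fun ω => 1 + (Real.exp t - 1) * Z ω) μ :=
    (integrable_const 1).add (hZint.const_mul _)
  have hint : Integrable (fun ω => Real.exp (t * Z ω)) μ :=
    hint2.congr (Filter.Eventually.of_forall fun ω => (hexp_eq ω).symm)
  refine ⟨hint, ?_⟩
  unfold mgf
  rw [integral_congr_ae (Filter.Eventually.of_forall hexp_eq),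
    integral_add (integrable_const 1) (hZint.const_mul _), integral_const_mul, hZmean]
  simp [measure_univ]
  ring

lemma bern_tail {Ω : Type*} [MeasurableSpace Ω] (μ : Measure Ω) [IsProbabilityMeasure μ]
    (n : ℕ) (hn : 0 < n) (p : ℝ) (hp : p ∈ Set.Ioo (0 : ℝ) 1)
    (X : Fin n → Ω → ℝ) (hXmeas : ∀ i, Measurable (X i))
    (hX01 : ∀ i ω, X i ω = 0 ∨ X i ω = 1)
    (hindep : iIndepFun X μ)
    (hlaw : ∀ i, μ {ω | X i ω = 1} = ENNReal.ofReal p)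
    (q : ℝ) (hq1 : p < q) (hq2 : q ≤ 1) :
    μ {ω | q ≤ (∑ i, X i ω) / n} ≤ ENNReal.ofReal (Real.exp (-(n * klR p q))) := by
  have hnR : (0:ℝ) < n := Nat.cast_pos.mpr hn
  have h1p : (0:ℝ) < 1 - p := by linarith [hp.2]
  rcases eq_or_lt_of_le hq2 with hq1' | hqlt
  · -- q = 1
    subst hq1'
    have hiInter : {ω | (1:ℝ) ≤ (∑ i, X i ω) / n} = ⋂ i, {ω | X i ω = 1} := by
      ext ω
      simp only [Set.mem_setOf_eq, Set.mem_iInter]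
      constructor
      · intro h i
        have hS : (n:ℝ) ≤ ∑ j, X j ω := by
          rw [le_div_iff₀ hnR, one_mul] at h; linarith
        by_contra hne
        have hzero : X i ω = 0 := (hX01 i ω).resolve_right hne
        have hle : ∑ j, X j ω ≤ ∑ j : Fin n, (if j = i then (0:ℝ) else 1) := by
          apply Finset.sum_le_sum; intro j _
          by_cases hj : j = i
          · subst hj; simp [hzero]
          · simp only [hj, if_false]
            rcases hX01 j ω with h0 | h0 <;> simp [h0]
        have hsum : ∑ j : Fin n, (if j = i then (0:ℝ) else 1) = n - 1 := by
          have hterm : ∀ j : Fin n, (if j = i then (0:ℝ) else 1)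
              = 1 - (if j = i then 1 else 0) := by intro j; split <;> ring
          simp_rw [hterm]
          rw [Finset.sum_sub_distrib, Finset.sum_const, Finset.sum_ite_eq'
            Finset.univ i (fun _ => (1:ℝ))]
          simp
        have h1n : (1:ℝ) ≤ n := by exact_mod_cast hn
        linarith
      · intro h
        have hsum : ∑ j, X j ω = n := by simp [h]
        rw [hsum, div_self (ne_of_gt hnR)]
    rw [hiInter, show μ (⋂ i, {ω | X i ω = 1}) = ∏ i, μ {ω | X i ω = 1} from
      hindep.meas_iInter (fun i => ⟨{1}, measurableSet_singleton 1, rfl⟩)]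
    simp only [hlaw]
    rw [Finset.prod_const, Finset.card_univ, Fintype.card_fin,
      ← ENNReal.ofReal_pow hp.1.le]
    apply ENNReal.ofReal_le_ofReal
    have hkl1 : klR p 1 = -Real.log p := by
      unfold klR
      simp [Real.log_inv]
    rw [hkl1]
    have hneg : -((n:ℝ) * -Real.log p) = (n:ℝ) * Real.log p := by ring
    rw [hneg, Real.exp_nat_mul, Real.exp_log hp.1]
  · -- q < 1
    have hq0 : 0 < q := lt_trans hp.1 hq1
    have h1q : (0:ℝ) < 1 - q := by linarith
    set L1 := Real.log (q / p) with hL1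
    set L2 := Real.log ((1 - q) / (1 - p)) with hL2
    set t := L1 - L2 with htdef
    have ht : 0 ≤ t := by
      have h1 : 0 ≤ L1 := Real.log_nonneg ((one_le_div hp.1).mpr hq1.le)
      have h2 : L2 ≤ 0 := Real.log_nonpos (by positivity) ((div_le_one h1p).mpr (by linarith))
      simp only [htdef]; linarith
    have hexpt : Real.exp t = q * (1 - p) / (p * (1 - q)) := by
      rw [htdef, Real.exp_sub, hL1, hL2, Real.exp_log (div_pos hq0 hp.1),
        Real.exp_log (div_pos h1q h1p)]
      field_simp
    have hpne : p ≠ 0 := ne_of_gt hp.1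
    have h1qne : (1:ℝ) - q ≠ 0 := ne_of_gt h1q
    have hfact : 1 - p + p * Real.exp t = (1 - p) / (1 - q) := by
      rw [hexpt]; field_simp; ring
    have hint : ∀ i : Fin n, Integrable (fun ω => Real.exp (t * X i ω)) μ :=
      fun i => (bern_mgf μ p hp.1.le (X i) (hXmeas i) (hX01 i) (hlaw i) t).1
    have hintS : Integrable (fun ω => Real.exp (t * (∑ i, X i) ω)) μ :=
      hindep.integrable_exp_mul_sum hXmeas (fun i _ => hint i)
    have hmgfS : mgf (∑ i, X i) μ t = ((1 - p) / (1 - q)) ^ n := by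
      rw [hindep.mgf_sum hXmeas,
        Finset.prod_congr rfl (fun i _ =>
          (bern_mgf μ p hp.1.le (X i) (hXmeas i) (hX01 i) (hlaw i) t).2),
        Finset.prod_const, Finset.card_univ, Fintype.card_fin, hfact]
    have hchern := measure_ge_le_exp_mul_mgf (X := ∑ i, X i) (μ := μ) (t := t)
      (q * n) ht hintS
    rw [hmgfS] at hchern
    have hEeq : {ω | q ≤ (∑ i, X i ω) / n} = {ω | q * n ≤ (∑ i, X i) ω} := by
      ext ω
      simp only [Set.mem_setOf_eq, Finset.sum_apply, le_div_iff₀ hnR]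
    have hval : Real.exp (-t * (q * n)) * ((1 - p) / (1 - q)) ^ n
        = Real.exp (-(n * klR p q)) := by
      have h2 : (1 - p) / (1 - q) = Real.exp (-L2) := by
        rw [Real.exp_neg, hL2, Real.exp_log (div_pos h1q h1p), inv_div]
      rw [h2, ← Real.exp_nat_mul, ← Real.exp_add]
      congr 1
      unfold klR
      rw [htdef, hL1, hL2]
      ring
    rw [hEeq]
    rw [ENNReal.le_ofReal_iff_toReal_le (measure_ne_top μ _) (Real.exp_nonneg _)]
    calc (μ {ω | q * n ≤ (∑ i, X i) ω}).toReal
        ≤ Real.exp (-t * (q * n)) * ((1 - p) / (1 - q)) ^ n := hchern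
      _ = Real.exp (-(n * klR p q)) := hval

lemma bern_upper {Ω : Type*} [MeasurableSpace Ω] (μ : Measure Ω) [IsProbabilityMeasure μ]
    (n : ℕ) (hn : 0 < n) (p : ℝ) (hp : p ∈ Set.Ioo (0 : ℝ) 1)
    (X : Fin n → Ω → ℝ) (hXmeas : ∀ i, Measurable (X i))
    (hX01 : ∀ i ω, X i ω = 0 ∨ X i ω = 1)
    (hindep : iIndepFun X μ)
    (hlaw : ∀ i, μ {ω | X i ω = 1} = ENNReal.ofReal p) (ε : ℝ) :
    μ {ω | ε < klR p ((∑ i, X i ω) / n) ∧ p < (∑ i, X i ω) / n}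
      ≤ ENNReal.ofReal (Real.exp (-(n * ε))) := by
  classical
  have hnR : (0:ℝ) < n := Nat.cast_pos.mpr hn
  set B := (Finset.range (n+1)).filter
    (fun k : ℕ => p < (k:ℝ)/n ∧ ε < klR p ((k:ℝ)/n)) with hB
  by_cases hBne : B.Nonempty
  · obtain ⟨k0, hk0B, hk0le⟩ : ∃ k0 ∈ B, ∀ k ∈ B, k0 ≤ k :=
      ⟨B.min' hBne, B.min'_mem hBne, fun k hk => B.min'_le k hk⟩
    rw [hB, Finset.mem_filter, Finset.mem_range, Nat.lt_succ_iff] at hk0B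
    set q := ((k0:ℕ):ℝ)/n with hqdef
    have hq1 : p < q := hk0B.2.1
    have hq2 : q ≤ 1 := by
      rw [hqdef, div_le_one hnR]
      exact_mod_cast hk0B.1
    have hsub : {ω | ε < klR p ((∑ i, X i ω) / n) ∧ p < (∑ i, X i ω) / n}
        ⊆ {ω | q ≤ (∑ i, X i ω) / n} := by
      rintro ω ⟨h1, h2⟩
      obtain ⟨k, hkn, hkeq⟩ := bern_count X hX01 ω
      simp only [Set.mem_setOf_eq]
      rw [hkeq] at h1 h2 ⊢
      have hkB : k ∈ B := by
        rw [hB, Finset.mem_filter, Finset.mem_range, Nat.lt_succ_iff]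
        exact ⟨hkn, h2, h1⟩
      have hk0k : k0 ≤ k := hk0le k hkB
      rw [hqdef]
      gcongr
    calc μ {ω | ε < klR p ((∑ i, X i ω) / n) ∧ p < (∑ i, X i ω) / n}
        ≤ μ {ω | q ≤ (∑ i, X i ω) / n} := measure_mono hsub
      _ ≤ ENNReal.ofReal (Real.exp (-(n * klR p q))) :=
          bern_tail μ n hn p hp X hXmeas hX01 hindep hlaw q hq1 hq2
      _ ≤ ENNReal.ofReal (Real.exp (-(n * ε))) := by
          apply ENNReal.ofReal_le_ofReal
          apply Real.exp_le_exp.mpr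
          have := hk0B.2.2
          nlinarith
  · have hE : {ω | ε < klR p ((∑ i, X i ω) / n) ∧ p < (∑ i, X i ω) / n} = ∅ := by
      rw [Set.eq_empty_iff_forall_notMem]
      rintro ω ⟨h1, h2⟩
      obtain ⟨k, hkn, hkeq⟩ := bern_count X hX01 ω
      rw [hkeq] at h1 h2
      apply hBne
      refine ⟨k, ?_⟩
      rw [hB, Finset.mem_filter, Finset.mem_range, Nat.lt_succ_iff]
      exact ⟨hkn, h2, h1⟩
    rw [hE, measure_empty]
    exact zero_le

/-- Bernoulli Kullback–Leibler divergence
`KL(a ‖ b) = a·log(a/b) + (1−a)·log((1−a)/(1−b))`, with the conventions `0·log 0 = 0` and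
`KL(a ‖ b) = +∞` when `b ∈ {0,1}` and `a ≠ b`. -/
noncomputable def bernKL (a b : ℝ) : ENNReal :=
  if a = b then 0
  else if b = 0 ∨ b = 1 then ⊤
  else ENNReal.ofReal (a * Real.log (a / b) + (1 - a) * Real.log ((1 - a) / (1 - b)))

lemma bernKL_eq (a p : ℝ) (hp : p ∈ Set.Ioo (0:ℝ) 1) :
    bernKL a p = ENNReal.ofReal (klR p a) := by
  unfold bernKL klR
  rcases eq_or_ne a p with h | h
  · subst h
    have h1 : a ≠ 0 := ne_of_gt hp.1
    have h2 : (1:ℝ) - a ≠ 0 := by have := hp.2; intro hh; linarith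
    simp [div_self h1, div_self h2]
  · rw [if_neg h, if_neg]
    push_neg
    exact ⟨ne_of_gt hp.1, by linarith [hp.2]⟩

/-- **Bernoulli KL confidence set.**
Let `X_1,…,X_n` be i.i.d. Bernoulli with mean `p ∈ (0,1)` and empirical mean `p̂`.  For
any `γ ∈ (0,1)`, the confidence set `C(p̂) = {u ∈ [0,1] : KL(p̂ ‖ u) ≤ (1/n)·log(2/(1−γ))}`
satisfies `ℙ(p ∈ C(p̂)) ≥ γ`. -/
theorem bernoulli_confidence_set
    {Ω : Type*} [MeasurableSpace Ω] (μ : Measure Ω) [IsProbabilityMeasure μ]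
    (n : ℕ) (hn : 0 < n) (p : ℝ) (hp : p ∈ Set.Ioo (0 : ℝ) 1)
    (X : Fin n → Ω → ℝ) (hXmeas : ∀ i, Measurable (X i))
    (hX01 : ∀ i ω, X i ω = 0 ∨ X i ω = 1)
    (hindep : iIndepFun X μ)
    (hlaw : ∀ i, μ {ω | X i ω = 1} = ENNReal.ofReal p)
    (γ : ℝ) (hγ : γ ∈ Set.Ioo (0 : ℝ) 1) :
    ENNReal.ofReal γ ≤
      μ {ω | p ∈ {u : ℝ | u ∈ Set.Icc (0 : ℝ) 1 ∧
          bernKL ((∑ i, X i ω) / n) u ≤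
            ENNReal.ofReal ((1 / n : ℝ) * Real.log (2 / (1 - γ)))}} := by
  obtain ⟨hp0, hp1⟩ := hp
  obtain ⟨hγ0, hγ1⟩ := hγ
  have hnR : (0:ℝ) < n := Nat.cast_pos.mpr hn
  have h1γ : (0:ℝ) < 1 - γ := by linarith
  set ε : ℝ := (1 / n : ℝ) * Real.log (2 / (1 - γ)) with hεdef
  have h2γ : (0:ℝ) < 2 / (1 - γ) := by positivity
  have hε0 : 0 ≤ ε := by
    apply mul_nonneg (by positivity)
    apply Real.log_nonneg
    rw [le_div_iff₀ h1γ]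
    linarith
  have hexpε : Real.exp (-((n:ℝ) * ε)) = (1 - γ) / 2 := by
    have hc : (n:ℝ) * ε = Real.log (2 / (1 - γ)) := by
      rw [hεdef]; field_simp
    rw [hc, Real.exp_neg, Real.exp_log h2γ, inv_div]
  -- The good event
  set G : Set Ω := {ω | klR p ((∑ i, X i ω) / n) ≤ ε} with hG
  have hGsub : G ⊆ {ω | p ∈ {u : ℝ | u ∈ Set.Icc (0 : ℝ) 1 ∧
      bernKL ((∑ i, X i ω) / n) u ≤ ENNReal.ofReal ε}} := by
    intro ω hω
    simp only [Set.mem_setOf_eq, Set.mem_Icc]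
    refine ⟨⟨hp0.le, hp1.le⟩, ?_⟩
    rw [bernKL_eq _ _ ⟨hp0, hp1⟩]
    exact ENNReal.ofReal_le_ofReal hω
  -- Bound the complement via two tails
  have hEu : μ {ω | ε < klR p ((∑ i, X i ω) / n) ∧ p < (∑ i, X i ω) / n}
      ≤ ENNReal.ofReal ((1 - γ) / 2) := by
    rw [← hexpε]
    exact bern_upper μ n hn p ⟨hp0, hp1⟩ X hXmeas hX01 hindep hlaw ε
  have hEl : μ {ω | ε < klR p ((∑ i, X i ω) / n) ∧ (∑ i, X i ω) / n < p}
      ≤ ENNReal.ofReal ((1 - γ) / 2) := by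
    -- pass to Y i = 1 - X i
    rw [← hexpε]
    set Y : Fin n → Ω → ℝ := fun i ω => 1 - X i ω with hY
    have hYmeas : ∀ i, Measurable (Y i) := fun i => measurable_const.sub (hXmeas i)
    have hY01 : ∀ i ω, Y i ω = 0 ∨ Y i ω = 1 := by
      intro i ω
      rcases hX01 i ω with h | h <;> simp [hY, h]
    have hYindep : iIndepFun Y μ :=
      hindep.comp (fun _ x => 1 - x) (fun _ => measurable_const.sub measurable_id)
    have hYlaw : ∀ i, μ {ω | Y i ω = 1} = ENNReal.ofReal (1 - p) := by
      intro i
      have hset : {ω | Y i ω = 1} = {ω | X i ω = 1}ᶜ := by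
        ext ω
        rcases hX01 i ω with h | h <;> simp [hY, h]
      have hAm : MeasurableSet {ω | X i ω = 1} := hXmeas i (measurableSet_singleton 1)
      rw [hset, measure_compl hAm (measure_ne_top μ _), hlaw i, measure_univ]
      rw [← ENNReal.ofReal_one, ← ENNReal.ofReal_sub _ hp0.le]
    have hYsum : ∀ ω, (∑ i, Y i ω) / n = 1 - (∑ i, X i ω) / n := by
      intro ω
      have h1 : ∑ i, Y i ω = n - ∑ i, X i ω := by
        rw [hY]; rw [Finset.sum_sub_distrib]; simp
      rw [h1, sub_div, div_self (ne_of_gt hnR)]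
    refine le_trans (measure_mono ?_) (bern_upper μ n hn (1 - p)
      ⟨by linarith, by linarith⟩ Y hYmeas hY01 hYindep hYlaw ε)
    rintro ω ⟨h1, h2⟩
    constructor
    · rw [hYsum ω]
      have hk : klR (1 - p) (1 - (∑ i, X i ω) / n) = klR p ((∑ i, X i ω) / n) :=
        klR_symm p _
      rw [hk]; exact h1
    · rw [hYsum ω]; linarith
  have hGc : μ Gᶜ ≤ ENNReal.ofReal (1 - γ) := by
    have hsplit : Gᶜ ⊆ {ω | ε < klR p ((∑ i, X i ω) / n) ∧ p < (∑ i, X i ω) / n}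
        ∪ {ω | ε < klR p ((∑ i, X i ω) / n) ∧ (∑ i, X i ω) / n < p} := by
      intro ω hω
      simp only [hG, Set.mem_compl_iff, Set.mem_setOf_eq, not_le] at hω
      rcases lt_trichotomy ((∑ i, X i ω) / n) p with h | h | h
      · exact Or.inr ⟨hω, h⟩
      · exfalso
        rw [h, klR_self p ⟨hp0, hp1⟩] at hω
        linarith
      · exact Or.inl ⟨hω, h⟩
    calc μ Gᶜ ≤ _ := measure_mono hsplit
      _ ≤ _ + _ := measure_union_le _ _
      _ ≤ ENNReal.ofReal ((1 - γ) / 2) + ENNReal.ofReal ((1 - γ) / 2) := add_le_add hEu hEl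
      _ = ENNReal.ofReal (1 - γ) := by
          rw [← ENNReal.ofReal_add (by positivity) (by positivity)]
          norm_num
  have hγeq : ENNReal.ofReal γ = 1 - ENNReal.ofReal (1 - γ) := by
    rw [← ENNReal.ofReal_one, ← ENNReal.ofReal_sub _ (by linarith)]
    norm_num
  calc ENNReal.ofReal γ = 1 - ENNReal.ofReal (1 - γ) := hγeq
    _ ≤ 1 - μ Gᶜ := tsub_le_tsub_left hGc 1
    _ = μ Set.univ - μ Gᶜ := by rw [measure_univ]
    _ ≤ μ (Set.univ \ Gᶜ) := le_measure_diff
    _ = μ G := by rw [Set.diff_compl, Set.univ_inter]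
    _ ≤ _ := measure_mono hGsub
end

section
/- Let P ∈ P^d be a probability vector, p̂ the empirical distribution of n i.i.d. categorical samples from P, and suppose d ≤ (n·C₀/4)^{1/3} with C₀ = e³/(2π). For any γ ∈ (0,1), the confidence set C(p̂) = { u ∈ P^d : KL(p̂ ‖ u) ≤ ((d−1)/n)·log(2(d−1)/(1−γ)) } satisfies ℙ( P ∈ C(p̂) ) ≥ γ. -/
open MeasureTheory ProbabilityTheory Real Finset


/-- Multinomial Kullback–Leibler divergence `KL(u ‖ v) = Σ_i u_i·log(u_i/v_i)`, with the
conventions `0·log 0 = 0` and `KL(u ‖ v) = +∞` if some `u_i > 0 = v_i`. -/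
noncomputable def multiKL {d : ℕ} (u v : Fin d → ℝ) : ENNReal :=
  if ∃ i, 0 < u i ∧ v i = 0 then ⊤
  else ENNReal.ofReal (∑ i, u i * Real.log (u i / v i))

/-- The empirical distribution of the categorical samples `X_1(ω),…,X_n(ω)`: category `i`
receives the fraction of the `n` samples equal to `i`. -/
noncomputable def empDist {Ω : Type*} {d n : ℕ} (X : Fin n → Ω → Fin d) (ω : Ω)
    (i : Fin d) : ℝ :=
  ((Finset.univ.filter (fun j : Fin n => X j ω = i)).card : ℝ) / n

namespace MCS

open scoped Classical

variable {d n : ℕ}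

/-- number of samples equal to `k` -/
def cntN (x : Fin n → Fin d) (k : ℕ) : ℕ := #{j | (x j : ℕ) = k}

/-- number of samples `≥ k` -/
def scnt (x : Fin n → Fin d) (k : ℕ) : ℕ := #{j | k ≤ (x j : ℕ)}

/-- `P` extended to `ℕ` -/
noncomputable def Pe (P : Fin d → ℝ) (k : ℕ) : ℝ := if h : k < d then P ⟨k, h⟩ else 0

/-- tail sum of `P` -/
noncomputable def Qe (P : Fin d → ℝ) (k : ℕ) : ℝ := ∑ i ∈ Finset.Ico k d, Pe P i

/-- weight (probability) of a sample vector -/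
noncomputable def wgt (P : Fin d → ℝ) (x : Fin n → Fin d) : ℝ := ∏ j, P (x j)

/-- conditional probability of `k` given `≥ k` -/
noncomputable def rr (P : Fin d → ℝ) (k : ℕ) : ℝ := Pe P k / Qe P k

/-- the `k`-th binary KL term in the chain rule decomposition -/
noncomputable def eK (P : Fin d → ℝ) (k : ℕ) (x : Fin n → Fin d) : ℝ :=
  (cntN x k : ℝ) * log ((cntN x k : ℝ) / ((scnt x k : ℝ) * rr P k)) +
  (scnt x (k+1) : ℝ) * log ((scnt x (k+1) : ℝ) / ((scnt x k : ℝ) * (1 - rr P k)))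

lemma Pe_coe (P : Fin d → ℝ) (i : Fin d) : Pe P (i : ℕ) = P i := by
  simp [Pe, Fin.eta, i.isLt]

lemma Pe_nonneg {P : Fin d → ℝ} (hP : ∀ i, 0 ≤ P i) (k : ℕ) : 0 ≤ Pe P k := by
  unfold Pe; split <;> simp [hP]

lemma Qe_nonneg {P : Fin d → ℝ} (hP : ∀ i, 0 ≤ P i) (k : ℕ) : 0 ≤ Qe P k :=
  Finset.sum_nonneg fun i _ => Pe_nonneg hP i

lemma Qe_succ (P : Fin d → ℝ) (k : ℕ) : Qe P k = Pe P k + Qe P (k+1) := by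
  rcases lt_or_ge k d with h | h
  · exact Finset.sum_eq_sum_Ico_succ_bot h _
  · have h1 : Finset.Ico k d = ∅ := Finset.Ico_eq_empty (by omega)
    have h2 : Finset.Ico (k+1) d = ∅ := Finset.Ico_eq_empty (by omega)
    have h3 : Pe P k = 0 := by unfold Pe; rw [dif_neg (by omega)]
    simp [Qe, h1, h2, h3]

lemma Qe_zero {P : Fin d → ℝ} (hPsum : ∑ i, P i = 1) : Qe P 0 = 1 := by
  have : Qe P 0 = ∑ i ∈ Finset.range d, Pe P i := by
    rw [Qe, Finset.range_eq_Ico]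
  rw [this, ← Fin.sum_univ_eq_sum_range (fun i => Pe P i) d]
  rw [← hPsum]
  exact Finset.sum_congr rfl fun i _ => Pe_coe P i

lemma Pe_le_Qe {P : Fin d → ℝ} (hP : ∀ i, 0 ≤ P i) (k : ℕ) : Pe P k ≤ Qe P k := by
  rw [Qe_succ]
  have := Qe_nonneg hP (k+1); linarith

lemma scnt_zero (x : Fin n → Fin d) : scnt x 0 = n := by
  simp [scnt]

lemma scnt_top (x : Fin n → Fin d) {k : ℕ} (h : d ≤ k) : scnt x k = 0 := by
  rw [scnt, Finset.card_eq_zero, Finset.filter_eq_empty_iff]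
  intro j _
  have := (x j).isLt
  omega

lemma scnt_succ (x : Fin n → Fin d) (k : ℕ) :
    scnt x k = cntN x k + scnt x (k+1) := by
  rw [scnt, cntN, scnt, ← Finset.card_union_of_disjoint]
  · congr 1
    rw [← Finset.filter_or]
    exact Finset.filter_congr fun j _ => by constructor <;> (intro h; omega)
  · rw [Finset.disjoint_filter]
    intro j _ h1 h2
    omega

lemma cntN_le_scnt (x : Fin n → Fin d) (k : ℕ) : cntN x k ≤ scnt x k := by
  rw [scnt_succ]; omega

lemma cntN_eq_zero {x : Fin n → Fin d} {k : ℕ} :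
    cntN x k = 0 ↔ ∀ j, (x j : ℕ) ≠ k := by
  rw [cntN, Finset.card_eq_zero, Finset.filter_eq_empty_iff]
  simp

lemma sum_cntN (x : Fin n → Fin d) : ∑ k ∈ Finset.range d, cntN x k = n := by
  have := Finset.card_eq_sum_card_fiberwise
    (f := fun j : Fin n => (x j : ℕ)) (s := Finset.univ) (t := Finset.range d)
    (fun j _ => Finset.mem_range.2 (x j).isLt)
  simpa [cntN] using this.symm

lemma wgt_nonneg {P : Fin d → ℝ} (hP : ∀ i, 0 ≤ P i) (x : Fin n → Fin d) : 0 ≤ wgt P x :=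
  Finset.prod_nonneg fun j _ => hP _

lemma wgt_pos_P {P : Fin d → ℝ} (hP : ∀ i, 0 ≤ P i) {x : Fin n → Fin d}
    (hx : wgt P x ≠ 0) {i : Fin d} (hi : cntN x (i : ℕ) ≠ 0) : 0 < P i := by
  rw [Ne, cntN_eq_zero] at hi
  push_neg at hi
  obtain ⟨j, hj⟩ := hi
  have hxj : x j = i := Fin.ext hj
  have : P (x j) ≠ 0 := by
    intro h0
    exact hx (Finset.prod_eq_zero (Finset.mem_univ j) h0)
  rw [hxj] at this
  exact lt_of_le_of_ne (hP i) (Ne.symm this)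

/-- positivity of the tail probability when the tail count is nonzero -/
lemma Qe_pos_of_scnt {P : Fin d → ℝ} (hP : ∀ i, 0 ≤ P i) {x : Fin n → Fin d}
    (hx : wgt P x ≠ 0) {k : ℕ} (hs : scnt x k ≠ 0) : 0 < Qe P k := by
  rw [scnt, Ne, Finset.card_eq_zero, Finset.filter_eq_empty_iff] at hs
  push_neg at hs
  obtain ⟨j, _, hj⟩ := hs
  have hP' : 0 < P (x j) := by
    refine wgt_pos_P hP hx (i := x j) ?_
    rw [Ne, cntN_eq_zero]; push_neg; exact ⟨j, rfl⟩
  have hmem : ((x j : ℕ)) ∈ Finset.Ico k d := Finset.mem_Ico.2 ⟨hj, (x j).isLt⟩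
  calc (0:ℝ) < Pe P (x j : ℕ) := by rw [Pe_coe]; exact hP'
    _ ≤ Qe P k := Finset.single_le_sum (fun i _ => Pe_nonneg hP i) hmem

lemma cntN_pos_P {P : Fin d → ℝ} (hP : ∀ i, 0 ≤ P i) {x : Fin n → Fin d}
    (hx : wgt P x ≠ 0) {k : ℕ} (hk : cntN x k ≠ 0) : 0 < Pe P k := by
  rw [Ne, cntN_eq_zero] at hk
  push_neg at hk
  obtain ⟨j, hj⟩ := hk
  have hkd : k < d := hj ▸ (x j).isLt
  have : Pe P k = P ⟨k, hkd⟩ := by simp [Pe, hkd]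
  rw [this]
  refine wgt_pos_P hP hx (i := ⟨k, hkd⟩) ?_
  rw [Ne, cntN_eq_zero]; push_neg; exact ⟨j, hj⟩


lemma sum_filter_ge (P : Fin d → ℝ) (k : ℕ) :
    ∑ v ∈ ({v : Fin d | k ≤ (v : ℕ)} : Finset (Fin d)), P v = Qe P k := by
  rw [Finset.sum_filter]
  have h1 : ∀ i : Fin d, (if k ≤ (i:ℕ) then P i else 0)
      = (fun m : ℕ => if k ≤ m then Pe P m else 0) (i : ℕ) := by
    intro i; simp [Pe_coe]
  rw [Finset.sum_congr rfl fun i _ => h1 i,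
    Fin.sum_univ_eq_sum_range (fun m => if k ≤ m then Pe P m else 0) d,
    ← Finset.sum_filter]
  rw [Qe]
  apply Finset.sum_congr _ (fun _ _ => rfl)
  ext i
  simp only [Finset.mem_filter, Finset.mem_range, Finset.mem_Ico]
  tauto

lemma sum_filter_eq (P : Fin d → ℝ) (k : ℕ) :
    ∑ v ∈ ({v : Fin d | (v : ℕ) = k} : Finset (Fin d)), P v = Pe P k := by
  rcases lt_or_ge k d with h | h
  · have : ({v : Fin d | (v : ℕ) = k} : Finset (Fin d)) = {⟨k, h⟩} := by
      ext v
      simp [Fin.ext_iff]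
    rw [this, Finset.sum_singleton, Pe, dif_pos h]
  · have : ({v : Fin d | (v : ℕ) = k} : Finset (Fin d)) = ∅ := by
      ext v
      simp only [Finset.mem_filter, Finset.notMem_empty, iff_false]
      rintro ⟨_, h2⟩
      have := v.isLt; omega
    rw [this, Finset.sum_empty, Pe, dif_neg (by omega)]

lemma sum_filter_lt {P : Fin d → ℝ} (hPsum : ∑ i, P i = 1) (k : ℕ) :
    ∑ v ∈ ({v : Fin d | (v : ℕ) < k} : Finset (Fin d)), P v = 1 - Qe P k := by
  have := Finset.sum_filter_add_sum_filter_not Finset.univ (fun v : Fin d => k ≤ (v:ℕ)) P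
  rw [hPsum] at this
  rw [sum_filter_ge] at this
  have h2 : ({v : Fin d | ¬ k ≤ (v : ℕ)} : Finset (Fin d))
      = ({v : Fin d | (v : ℕ) < k} : Finset (Fin d)) := by
    apply Finset.filter_congr; intro v _; exact not_le
  rw [h2] at this
  linarith

/-- key factorization: sum of product weights over sample vectors whose "≥ k part" is
exactly `T` and whose values on `T` satisfy `p`. -/
lemma sumGroup (k : ℕ) (T : Finset (Fin n)) (p : Fin d → Prop) [DecidablePred p]
    (hp : ∀ v, p v → k ≤ (v : ℕ)) (g : Fin d → ℝ) :
    ∑ x ∈ ({x : Fin n → Fin d |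
        ({j : Fin n | k ≤ (x j : ℕ)} : Finset (Fin n)) = T ∧ ∀ j ∈ T, p (x j)} :
        Finset (Fin n → Fin d)), ∏ j, g (x j)
    = (∑ v ∈ ({v : Fin d | p v} : Finset (Fin d)), g v) ^ T.card *
      (∑ v ∈ ({v : Fin d | (v : ℕ) < k} : Finset (Fin d)), g v) ^ (n - T.card) := by
  set hi := ({v : Fin d | p v} : Finset (Fin d))
  set lo := ({v : Fin d | (v : ℕ) < k} : Finset (Fin d))
  have hset : ({x : Fin n → Fin d |
        ({j : Fin n | k ≤ (x j : ℕ)} : Finset (Fin n)) = T ∧ ∀ j ∈ T, p (x j)} :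
        Finset (Fin n → Fin d)) = Fintype.piFinset (fun j => if j ∈ T then hi else lo) := by
    ext x
    simp only [Fintype.mem_piFinset, Finset.mem_filter, Finset.mem_univ, true_and]
    constructor
    · rintro ⟨hT, hpT⟩ j
      by_cases hj : j ∈ T
      · simp only [hj, if_true]
        simp only [hi, Finset.mem_filter, Finset.mem_univ, true_and]
        exact hpT j hj
      · simp only [hj, if_false]
        simp only [lo, Finset.mem_filter, Finset.mem_univ, true_and]
        rw [← hT] at hj
        simp only [Finset.mem_filter, Finset.mem_univ, true_and] at hj
        omega
    · intro h
      have hT : ({j : Fin n | k ≤ (x j : ℕ)} : Finset (Fin n)) = T := by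
        ext j
        simp only [Finset.mem_filter, Finset.mem_univ, true_and]
        constructor
        · intro hk
          by_contra hj
          have := h j
          rw [if_neg hj] at this
          simp only [lo, Finset.mem_filter, Finset.mem_univ, true_and] at this
          omega
        · intro hj
          have := h j
          rw [if_pos hj] at this
          simp only [hi, Finset.mem_filter, Finset.mem_univ, true_and] at this
          exact hp _ this
      refine ⟨hT, fun j hj => ?_⟩
      have := h j
      rw [if_pos hj] at this
      simpa only [hi, Finset.mem_filter, Finset.mem_univ, true_and] using this
  rw [hset, ← Finset.prod_univ_sum]
  have : ∀ j : Fin n, ∑ v ∈ (if j ∈ T then hi else lo), g v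
      = if j ∈ T then (∑ v ∈ hi, g v) else (∑ v ∈ lo, g v) := by
    intro j; split <;> rfl
  rw [Finset.prod_congr rfl fun j _ => this j, Finset.prod_ite _ _]
  rw [Finset.prod_const, Finset.prod_const]
  congr 2
  · rw [Finset.filter_univ_mem]
  · have : ({j : Fin n | j ∉ T} : Finset (Fin n)) = Tᶜ := by
      ext j; simp
    rw [this, Finset.card_compl, Fintype.card_fin]

/-- the optimal-λ Chernoff exponent identity for the binary KL divergence -/
lemma tail_core {r : ℝ} (hr0 : 0 < r) (hr1 : r < 1) {a s : ℕ} (h0 : 0 < a) (has : a < s) :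
    -(log (((a:ℝ) * (1 - r)) / (((s:ℝ) - a) * r)) * a) +
      (s:ℝ) * log (r * exp (log (((a:ℝ) * (1 - r)) / (((s:ℝ) - a) * r))) + (1 - r)) =
    -((a:ℝ) * log ((a:ℝ) / ((s:ℝ) * r)) + ((s:ℝ) - a) * log (((s:ℝ) - a)/((s:ℝ) * (1 - r)))) := by
  have ha : (0:ℝ) < a := by exact_mod_cast h0
  have hs : (0:ℝ) < s := by exact_mod_cast (h0.trans has)
  have hsa : (0:ℝ) < (s:ℝ) - a := by
    have : (a:ℝ) < s := by exact_mod_cast has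
    linarith
  have h1r : (0:ℝ) < 1 - r := by linarith
  have hE : exp (log (((a:ℝ) * (1 - r)) / (((s:ℝ) - a) * r)))
      = ((a:ℝ) * (1 - r)) / (((s:ℝ) - a) * r) := exp_log (by positivity)
  rw [hE]
  have hD : r * (((a:ℝ) * (1 - r)) / (((s:ℝ) - a) * r)) + (1 - r)
      = (1 - r) * (s:ℝ) / ((s:ℝ) - a) := by
    field_simp
    ring
  rw [hD]
  have l0 : log ((a:ℝ) * (1 - r) / (((s:ℝ) - a) * r))
      = log a + log (1 - r) - (log ((s:ℝ) - a) + log r) := by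
    rw [log_div (by positivity) (by positivity), log_mul (by positivity) (by positivity),
      log_mul (by positivity) (by positivity)]
  have l1 : log ((1 - r) * (s:ℝ) / ((s:ℝ) - a)) = log (1 - r) + log s - log ((s:ℝ) - a) := by
    rw [log_div (by positivity) (by positivity), log_mul (by positivity) (by positivity)]
  have l2 : log ((a:ℝ) / ((s:ℝ) * r)) = log a - (log s + log r) := by
    rw [log_div (by positivity) (by positivity), log_mul (by positivity) (by positivity)]
  have l3 : log (((s:ℝ) - a) / ((s:ℝ) * (1 - r))) = log ((s:ℝ) - a) - (log s + log (1 - r)) := by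
    rw [log_div (by positivity) (by positivity), log_mul (by positivity) (by positivity)]
  rw [l0, l1, l2, l3]
  ring

/-- the Chernoff bound with the optimal `λ`, normalized form -/
lemma chernoff_pow {r L : ℝ} (hr0 : 0 < r) (hr1 : r < 1) {a s : ℕ} (h0 : 0 < a) (has : a < s)
    (hL : L < (a:ℝ) * log ((a:ℝ)/((s:ℝ)*r)) + ((s:ℝ)-a) * log (((s:ℝ)-a)/((s:ℝ)*(1-r)))) :
    exp (-(log (((a:ℝ) * (1 - r)) / (((s:ℝ) - a) * r)) * a)) *
      (r * exp (log (((a:ℝ) * (1 - r)) / (((s:ℝ) - a) * r))) + (1 - r)) ^ s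
    ≤ exp (-L) := by
  have ha : (0:ℝ) < a := by exact_mod_cast h0
  have hsa : (0:ℝ) < (s:ℝ) - a := by
    have : (a:ℝ) < s := by exact_mod_cast has
    linarith
  have h1r : (0:ℝ) < 1 - r := by linarith
  set lam := log (((a:ℝ) * (1 - r)) / (((s:ℝ) - a) * r)) with hlam
  have hDpos : 0 < r * exp lam + (1 - r) := by positivity
  have hpow : (r * exp lam + (1 - r)) ^ s = exp ((s:ℝ) * log (r * exp lam + (1 - r))) := by
    rw [exp_nat_mul, exp_log hDpos]
  rw [hpow, ← exp_add]
  apply exp_le_exp.2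
  rw [tail_core hr0 hr1 h0 has]
  linarith


/-- the binary KL exponent function -/
noncomputable def phi (r : ℝ) (s m : ℕ) : ℝ :=
  (m:ℝ) * log ((m:ℝ)/((s:ℝ)*r)) + ((s:ℝ)-(m:ℝ)) * log (((s:ℝ)-(m:ℝ))/((s:ℝ)*(1-r)))

lemma phi_r_zero {s m : ℕ} (hm : m ≤ s) : phi 0 s m ≤ 0 := by
  have h1 : ((s:ℝ)*(0:ℝ)) = 0 := mul_zero _
  rw [phi, h1, div_zero, log_zero, mul_zero, zero_add]
  rcases eq_or_lt_of_le hm with h | h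
  · rw [h, sub_self, zero_mul]
  · have hs : (0:ℝ) < s := by
      have : (0:ℕ) < s := by omega
      exact_mod_cast this
    have hsm : (0:ℝ) < (s:ℝ) - m := by
      have : (m:ℝ) < s := by exact_mod_cast h
      linarith
    apply mul_nonpos_of_nonneg_of_nonpos hsm.le
    apply log_nonpos (by positivity)
    rw [div_le_one (by rw [sub_zero]; positivity)]
    have hm0 : (0:ℝ) ≤ m := Nat.cast_nonneg m
    linarith

lemma phi_r_one {s m : ℕ} (hm : m ≤ s) : phi 1 s m ≤ 0 := by
  have h1 : ((s:ℝ)*((1:ℝ)-1)) = 0 := by ring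
  rw [phi, h1, div_zero, log_zero, mul_zero, add_zero]
  rcases Nat.eq_zero_or_pos m with h | h
  · rw [h]; simp
  · have hmpos : (0:ℝ) < m := by exact_mod_cast h
    have hs : (0:ℝ) < s := by
      have : (0:ℕ) < s := by omega
      exact_mod_cast this
    apply mul_nonpos_of_nonneg_of_nonpos hmpos.le
    apply log_nonpos (by positivity)
    rw [mul_one, div_le_one hs]
    exact_mod_cast hm

lemma phi_top {r : ℝ} (hr : 0 < r) {s : ℕ} (hs : 0 < s) : phi r s s = -((s:ℝ) * log r) := by
  have hs' : (0:ℝ) < s := by exact_mod_cast hs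
  have h1 : ((s:ℝ) - s) = 0 := sub_self _
  rw [phi, h1, zero_mul, add_zero]
  have h2 : (s:ℝ)/((s:ℝ)*r) = r⁻¹ := by field_simp
  rw [h2, log_inv]
  ring

lemma phi_bot {r : ℝ} (hr : r < 1) {s : ℕ} (hs : 0 < s) : phi r s 0 = -((s:ℝ) * log (1-r)) := by
  have hs' : (0:ℝ) < s := by exact_mod_cast hs
  have h1r : (0:ℝ) < 1 - r := by linarith
  rw [phi, Nat.cast_zero, zero_mul, zero_add, sub_zero]
  have h2 : (s:ℝ)/((s:ℝ)*(1-r)) = (1-r)⁻¹ := by field_simp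
  rw [h2, log_inv]
  ring

lemma phi_s_zero (r : ℝ) : phi r 0 0 = 0 := by
  rw [phi]
  simp

/-- Chernoff bound, in terms of `phi` -/
lemma chernoff_phi {r L : ℝ} (hr0 : 0 < r) (hr1 : r < 1) {a s : ℕ} (h0 : 0 < a) (has : a < s)
    (hL : L < phi r s a) :
    exp (-(log (((a:ℝ) * (1 - r)) / (((s:ℝ) - a) * r)) * a)) *
      (r * exp (log (((a:ℝ) * (1 - r)) / (((s:ℝ) - a) * r))) + (1 - r)) ^ s
    ≤ exp (-L) :=
  chernoff_pow hr0 hr1 h0 has hL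

def Tset (k : ℕ) (x : Fin n → Fin d) : Finset (Fin n) := {j | k ≤ (x j : ℕ)}

lemma Tset_card (k : ℕ) (x : Fin n → Fin d) : (Tset k x).card = scnt x k := rfl

lemma sum_filter_ge_ite (P : Fin d → ℝ) (k : ℕ) (lam : ℝ) :
    ∑ v ∈ ({v : Fin d | k ≤ (v:ℕ)} : Finset (Fin d)),
      (P v * exp (lam * (if (v:ℕ) = k then 1 else 0)))
    = Pe P k * exp lam + Qe P (k+1) := by
  have hsplit : ({v : Fin d | k ≤ (v:ℕ)} : Finset (Fin d))
      = ({v : Fin d | (v:ℕ) = k} : Finset (Fin d)) ∪ ({v : Fin d | k+1 ≤ (v:ℕ)} : Finset (Fin d)) := by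
    rw [← Finset.filter_or]
    exact Finset.filter_congr fun v _ => by constructor <;> (intro h; omega)
  have hdisj : Disjoint ({v : Fin d | (v:ℕ) = k} : Finset (Fin d))
      ({v : Fin d | k+1 ≤ (v:ℕ)} : Finset (Fin d)) := by
    rw [Finset.disjoint_filter]
    intro v _ h1 h2
    omega
  rw [hsplit, Finset.sum_union hdisj]
  congr 1
  · have : ∀ v ∈ ({v : Fin d | (v:ℕ) = k} : Finset (Fin d)),
        P v * exp (lam * (if (v:ℕ) = k then 1 else 0)) = P v * exp lam := by
      intro v hv
      rw [if_pos (Finset.mem_filter.1 hv).2, mul_one]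
    rw [Finset.sum_congr rfl this, ← Finset.sum_mul, sum_filter_eq]
  · have : ∀ v ∈ ({v : Fin d | k+1 ≤ (v:ℕ)} : Finset (Fin d)),
        P v * exp (lam * (if (v:ℕ) = k then 1 else 0)) = P v := by
      intro v hv
      have := (Finset.mem_filter.1 hv).2
      rw [if_neg (by omega), mul_zero, exp_zero, mul_one]
    rw [Finset.sum_congr rfl this, sum_filter_ge]

/-- the exponentially weighted sum over a fiber of `Tset` -/
lemma groupW {P : Fin d → ℝ} (hPsum : ∑ i, P i = 1) (k : ℕ) (T : Finset (Fin n)) (lam : ℝ) :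
    ∑ x ∈ ({x : Fin n → Fin d | Tset k x = T} : Finset (Fin n → Fin d)),
      (wgt P x * exp (lam * (cntN x k : ℝ)))
    = (Pe P k * exp lam + Qe P (k+1)) ^ T.card * (1 - Qe P k) ^ (n - T.card) := by
  have hs := sumGroup (n := n) k T (fun v => k ≤ (v:ℕ)) (fun v h => h)
    (fun v => P v * exp (lam * (if (v:ℕ) = k then 1 else 0)))
  have hset : ({x : Fin n → Fin d |
      ({j : Fin n | k ≤ (x j : ℕ)} : Finset (Fin n)) = T ∧ ∀ j ∈ T, k ≤ ((x j):ℕ)} :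
      Finset (Fin n → Fin d)) = ({x : Fin n → Fin d | Tset k x = T} : Finset (Fin n → Fin d)) := by
    apply Finset.filter_congr
    intro x _
    constructor
    · exact fun h => h.1
    · intro h
      refine ⟨h, fun j hj => ?_⟩
      rw [← h] at hj
      exact (Finset.mem_filter.1 hj).2
  have hsummand : ∀ x : Fin n → Fin d,
      (∏ j, (P (x j) * exp (lam * (if ((x j):ℕ) = k then 1 else 0))))
      = wgt P x * exp (lam * (cntN x k : ℝ)) := by
    intro x
    rw [Finset.prod_mul_distrib, ← Real.exp_sum, ← Finset.mul_sum, Finset.sum_boole]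
    rfl
  rw [hset, Finset.sum_congr rfl (fun x _ => hsummand x)] at hs
  have hlo : ∑ v ∈ ({v : Fin d | (v:ℕ) < k} : Finset (Fin d)),
      (P v * exp (lam * (if (v:ℕ) = k then 1 else 0))) = 1 - Qe P k := by
    have hh : ∀ v ∈ ({v : Fin d | (v:ℕ) < k} : Finset (Fin d)),
        P v * exp (lam * (if (v:ℕ) = k then 1 else 0)) = P v := by
      intro v hv
      have := (Finset.mem_filter.1 hv).2
      rw [if_neg (by omega), mul_zero, exp_zero, mul_one]
    rw [Finset.sum_congr rfl hh, sum_filter_lt hPsum]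
  rw [hs, sum_filter_ge_ite, hlo]

/-- plain probability of a fiber of `Tset` -/
lemma groupW0 {P : Fin d → ℝ} (hPsum : ∑ i, P i = 1) (k : ℕ) (T : Finset (Fin n)) :
    ∑ x ∈ ({x : Fin n → Fin d | Tset k x = T} : Finset (Fin n → Fin d)), wgt P x
    = Qe P k ^ T.card * (1 - Qe P k) ^ (n - T.card) := by
  have := groupW hPsum k T 0
  simp only [zero_mul, exp_zero, mul_one] at this
  rw [this, ← Qe_succ]

/-- sum over the fiber where moreover all values on `T` equal `k` -/
lemma groupEq {P : Fin d → ℝ} (hPsum : ∑ i, P i = 1) (k : ℕ) (T : Finset (Fin n)) :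
    ∑ x ∈ ({x : Fin n → Fin d | Tset k x = T ∧ ∀ j ∈ T, ((x j):ℕ) = k} :
      Finset (Fin n → Fin d)), wgt P x
    = Pe P k ^ T.card * (1 - Qe P k) ^ (n - T.card) := by
  have hs := sumGroup (n := n) k T (fun v => (v:ℕ) = k) (fun v h => le_of_eq h.symm) P
  rw [sum_filter_eq, sum_filter_lt hPsum] at hs
  exact hs

/-- sum over the fiber where moreover all values on `T` are `> k` -/
lemma groupTail {P : Fin d → ℝ} (hPsum : ∑ i, P i = 1) (k : ℕ) (T : Finset (Fin n)) :
    ∑ x ∈ ({x : Fin n → Fin d | Tset k x = T ∧ ∀ j ∈ T, k+1 ≤ ((x j):ℕ)} :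
      Finset (Fin n → Fin d)), wgt P x
    = Qe P (k+1) ^ T.card * (1 - Qe P k) ^ (n - T.card) := by
  have hs := sumGroup (n := n) k T (fun v => k+1 ≤ (v:ℕ)) (fun v h => by omega) P
  rw [sum_filter_ge, sum_filter_lt hPsum] at hs
  exact hs

set_option maxHeartbeats 1000000 in
/-- The two-sided Chernoff bound on a fiber of `Tset`. -/
lemma perT {P : Fin d → ℝ} (hP : ∀ i, 0 ≤ P i) (hPsum : ∑ i, P i = 1) {L : ℝ} (hL : 0 < L)
    (k : ℕ) (T : Finset (Fin n)) :
    ∑ x ∈ ({x : Fin n → Fin d | L < eK P k x ∧ Tset k x = T} : Finset (Fin n → Fin d)), wgt P x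
      ≤ 2 * exp (-L) * (Qe P k ^ T.card * (1 - Qe P k) ^ (n - T.card)) := by
  set s := T.card with hs
  set B := Pe P k with hB
  set C := Qe P (k+1) with hC
  set Q := Qe P k with hQ
  set r := rr P k with hr
  have hrBQ : r = B / Q := rfl
  have hA0 : 0 ≤ 1 - Q := by
    have h := Finset.sum_nonneg (s := ({v : Fin d | (v:ℕ) < k} : Finset (Fin d)))
      (fun v _ => hP v)
    rwa [sum_filter_lt hPsum] at h
  have hQ0 : 0 ≤ Q := Qe_nonneg hP k
  have hB0 : 0 ≤ B := Pe_nonneg hP k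
  have hC0 : 0 ≤ C := Qe_nonneg hP (k+1)
  have hQBC : Q = B + C := Qe_succ P k
  have hwnn : ∀ x : Fin n → Fin d, 0 ≤ wgt P x := wgt_nonneg hP
  have hcnt_le : ∀ x : Fin n → Fin d, Tset k x = T → cntN x k ≤ s := by
    intro x hx
    rw [hs, ← hx, Tset_card]
    exact cntN_le_scnt x k
  have heK : ∀ x : Fin n → Fin d, Tset k x = T → eK P k x = phi r s (cntN x k) := by
    intro x hx
    have h1 : scnt x k = s := by rw [hs, ← hx, Tset_card]
    have h3 := scnt_succ x k
    rw [h1] at h3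
    have h2 : (scnt x (k+1) : ℝ) = (s:ℝ) - (cntN x k : ℝ) := by
      have h4 := congrArg (Nat.cast (R := ℝ)) h3
      push_cast at h4
      linarith
    simp only [eK, phi, ← hr]
    rw [h1, h2]
  have hdeg : ∀ m : ℕ, m ≤ s → L < phi r s m → 0 < B ∧ 0 < C := by
    intro m hm hLm
    by_cases hBz : B = 0
    · exfalso
      have hrz : r = 0 := by rw [hrBQ, hBz, zero_div]
      rw [hrz] at hLm
      have := phi_r_zero (s := s) (m := m) hm
      linarith
    · have hBpos : 0 < B := lt_of_le_of_ne hB0 (Ne.symm hBz)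
      by_cases hCz : C = 0
      · exfalso
        have hQB : Q = B := by rw [hQBC, hCz, add_zero]
        have hr1 : r = 1 := by rw [hrBQ, hQB, div_self hBpos.ne']
        rw [hr1] at hLm
        have := phi_r_one (s := s) (m := m) hm
        linarith
      · exact ⟨hBpos, lt_of_le_of_ne hC0 (Ne.symm hCz)⟩
  have hsplit := Finset.sum_filter_add_sum_filter_not
    (({x : Fin n → Fin d | L < eK P k x ∧ Tset k x = T} : Finset (Fin n → Fin d)))
    (fun x => r * (s:ℝ) ≤ (cntN x k : ℝ)) (wgt P)
  rw [← hsplit]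
  have hup : ∑ x ∈ (({x : Fin n → Fin d | L < eK P k x ∧ Tset k x = T} :
        Finset (Fin n → Fin d))).filter (fun x => r * (s:ℝ) ≤ (cntN x k : ℝ)), wgt P x
      ≤ exp (-L) * (Q ^ s * (1 - Q) ^ (n - s)) := by
    set Mp := (Finset.range (s+1)).filter
      (fun m => L < phi r s m ∧ r * (s:ℝ) ≤ (m:ℝ)) with hMp
    have hmem : ∀ x, x ∈ (({x : Fin n → Fin d | L < eK P k x ∧ Tset k x = T} :
        Finset (Fin n → Fin d))).filter (fun x => r * (s:ℝ) ≤ (cntN x k : ℝ)) →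
        Tset k x = T ∧ cntN x k ∈ Mp := by
      intro x hx
      rw [Finset.mem_filter] at hx
      obtain ⟨hx1, hx2⟩ := hx
      rw [Finset.mem_filter] at hx1
      obtain ⟨-, hx3, hx4⟩ := hx1
      rw [heK x hx4] at hx3
      refine ⟨hx4, ?_⟩
      rw [hMp, Finset.mem_filter, Finset.mem_range]
      exact ⟨Nat.lt_succ_of_le (hcnt_le x hx4), hx3, hx2⟩
    rcases Finset.eq_empty_or_nonempty Mp with hMe | hMne
    · have hem : (({x : Fin n → Fin d | L < eK P k x ∧ Tset k x = T} :
          Finset (Fin n → Fin d))).filter (fun x => r * (s:ℝ) ≤ (cntN x k : ℝ)) = ∅ := by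
        apply Finset.eq_empty_of_forall_notMem
        intro x hx
        have := (hmem x hx).2
        rw [hMe] at this
        exact absurd this (Finset.notMem_empty _)
      rw [hem, Finset.sum_empty]
      have : (0:ℝ) ≤ Q ^ s * (1 - Q) ^ (n - s) := by positivity
      positivity
    · obtain ⟨a, haMem, hamin⟩ := Finset.exists_min_image Mp id hMne
      simp only [id] at hamin
      rw [hMp, Finset.mem_filter, Finset.mem_range] at haMem
      obtain ⟨haS', haphi, haR⟩ := haMem
      have haS : a ≤ s := by omega
      obtain ⟨hBpos, hCpos⟩ := hdeg a haS haphi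
      have hQpos : 0 < Q := by rw [hQBC]; linarith
      have hr0 : 0 < r := by rw [hrBQ]; positivity
      have hr1lt : r < 1 := by
        rw [hrBQ, div_lt_one hQpos, hQBC]; linarith
      have hBrQ : B = r * Q := by rw [hrBQ]; field_simp
      have hCrQ : C = (1 - r) * Q := by rw [hBrQ] at hQBC; linarith
      have hsub1 : ∑ x ∈ (({x : Fin n → Fin d | L < eK P k x ∧ Tset k x = T} :
            Finset (Fin n → Fin d))).filter (fun x => r * (s:ℝ) ≤ (cntN x k : ℝ)), wgt P x
          ≤ ∑ x ∈ ({x : Fin n → Fin d | Tset k x = T ∧ a ≤ cntN x k} :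
            Finset (Fin n → Fin d)), wgt P x := by
        apply Finset.sum_le_sum_of_subset_of_nonneg
        · intro x hx
          have h := hmem x hx
          rw [Finset.mem_filter]
          exact ⟨Finset.mem_univ _, h.1, hamin _ h.2⟩
        · exact fun x _ _ => hwnn x
      refine le_trans hsub1 ?_
      rcases eq_or_lt_of_le haS with haEq | haLt
      · -- a = s : all of T maps to k
        have hspos : 0 < s := by
          rcases Nat.eq_zero_or_pos s with h0 | h
          · exfalso
            have ha00 : a = 0 := by omega
            rw [ha00, h0, phi_s_zero] at haphi
            linarith
          · exact h
        have hsevent : ({x : Fin n → Fin d | Tset k x = T ∧ a ≤ cntN x k} :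
            Finset (Fin n → Fin d))
            = ({x : Fin n → Fin d | Tset k x = T ∧ ∀ j ∈ T, ((x j):ℕ) = k} :
              Finset (Fin n → Fin d)) := by
          apply Finset.filter_congr
          intro x _
          constructor
          · rintro ⟨hTx, hax⟩
            refine ⟨hTx, fun j hj => ?_⟩
            have hFsub : ({j : Fin n | ((x j):ℕ) = k} : Finset (Fin n)) ⊆ Tset k x := by
              intro i hi
              rw [Finset.mem_filter] at hi
              rw [Tset, Finset.mem_filter]
              exact ⟨hi.1, le_of_eq hi.2.symm⟩
            have hcard : (Tset k x).card ≤ ({j : Fin n | ((x j):ℕ) = k} :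
                Finset (Fin n)).card := by
              rw [hTx, ← hs]
              calc s = a := haEq.symm
                _ ≤ cntN x k := hax
            have hFeq := Finset.eq_of_subset_of_card_le hFsub hcard
            rw [← hTx] at hj
            rw [← hFeq] at hj
            exact (Finset.mem_filter.1 hj).2
          · rintro ⟨hTx, hkx⟩
            refine ⟨hTx, ?_⟩
            have hTsub : T ⊆ ({j : Fin n | ((x j):ℕ) = k} : Finset (Fin n)) := by
              intro j hj
              rw [Finset.mem_filter]
              exact ⟨Finset.mem_univ _, hkx j hj⟩
            calc a ≤ s := haS
              _ = T.card := hs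
              _ ≤ cntN x k := Finset.card_le_card hTsub
        rw [hsevent, groupEq hPsum k T]
        have hphis : phi r s s = -((s:ℝ) * log r) := phi_top hr0 hspos
        rw [haEq, hphis] at haphi
        have hrs : r ^ s ≤ exp (-L) := by
          have hre : r ^ s = exp ((s:ℝ) * log r) := by
            rw [Real.exp_nat_mul, exp_log hr0]
          rw [hre]
          apply exp_le_exp.2
          linarith
        calc Pe P k ^ T.card * (1 - Qe P k) ^ (n - T.card)
            = r ^ s * (Q ^ s * (1 - Q) ^ (n - s)) := by
              rw [← hs, ← hB, ← hQ, hBrQ, mul_pow]; ring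
          _ ≤ exp (-L) * (Q ^ s * (1 - Q) ^ (n - s)) := by
              apply mul_le_mul_of_nonneg_right hrs (by positivity)
      · -- a < s : genuine Chernoff
        have hspos : 0 < s := by omega
        have hsR : (0:ℝ) < s := by exact_mod_cast hspos
        have ha0 : 0 < a := by
          by_contra h0
          have ha00 : a = 0 := by omega
          rw [ha00] at haR
          have : (0:ℝ) < r * s := mul_pos hr0 hsR
          simp only [Nat.cast_zero] at haR
          linarith
        have ha0' : (0:ℝ) < a := by exact_mod_cast ha0
        have haLt' : (a:ℝ) < s := by exact_mod_cast haLt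
        have hsa : (0:ℝ) < (s:ℝ) - a := by linarith
        have h1r : (0:ℝ) < 1 - r := by linarith
        set lam := log ((a:ℝ)*(1-r)/(((s:ℝ)-a)*r)) with hlam
        have hlam0 : 0 ≤ lam := by
          apply log_nonneg
          rw [le_div_iff₀ (by positivity), one_mul]
          nlinarith [haR]
        have hstep1 : ∑ x ∈ ({x : Fin n → Fin d | Tset k x = T ∧ a ≤ cntN x k} :
              Finset (Fin n → Fin d)), wgt P x
            ≤ ∑ x ∈ ({x : Fin n → Fin d | Tset k x = T} : Finset (Fin n → Fin d)),
                (wgt P x * exp (lam * (cntN x k : ℝ))) * exp (-(lam * a)) := by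
          have e1 : ∀ x ∈ ({x : Fin n → Fin d | Tset k x = T ∧ a ≤ cntN x k} :
              Finset (Fin n → Fin d)),
              wgt P x ≤ (wgt P x * exp (lam * (cntN x k:ℝ))) * exp (-(lam * a)) := by
            intro x hx
            have hax : (a:ℝ) ≤ (cntN x k : ℝ) := by
              exact_mod_cast ((Finset.mem_filter.1 hx).2).2
            have hee : (1:ℝ) ≤ exp (lam * (cntN x k:ℝ)) * exp (-(lam*a)) := by
              rw [← exp_add]
              calc (1:ℝ) = exp 0 := exp_zero.symm
                _ ≤ _ := exp_le_exp.2 (by nlinarith)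
            calc wgt P x = wgt P x * 1 := (mul_one _).symm
              _ ≤ _ := by
                  rw [mul_assoc]
                  exact mul_le_mul_of_nonneg_left hee (hwnn x)
          refine le_trans (Finset.sum_le_sum e1) ?_
          apply Finset.sum_le_sum_of_subset_of_nonneg
          · intro x hx
            rw [Finset.mem_filter] at hx ⊢
            exact ⟨hx.1, hx.2.1⟩
          · intro x _ _
            have h1 := hwnn x
            positivity
        rw [← Finset.sum_mul, groupW hPsum k T lam] at hstep1
        refine le_trans hstep1 ?_
        have hBC : Pe P k * exp lam + Qe P (k+1) = Q * (r * exp lam + (1 - r)) := by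
          rw [← hB, ← hC, hBrQ, hCrQ]; ring
        have hkey := chernoff_phi hr0 hr1lt ha0 haLt haphi
        rw [← hlam] at hkey
        calc (Pe P k * exp lam + Qe P (k+1)) ^ T.card * (1 - Qe P k) ^ (n - T.card)
              * exp (-(lam * a))
            = (exp (-(lam * a)) * (r * exp lam + (1-r)) ^ s) * Q ^ s * (1-Q) ^ (n-s) := by
              rw [← hs, ← hQ, hBC, mul_pow]; ring
          _ ≤ (exp (-L) * Q ^ s) * (1-Q) ^ (n-s) := by
              apply mul_le_mul_of_nonneg_right _ (by positivity)
              exact mul_le_mul_of_nonneg_right hkey (by positivity)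
          _ = exp (-L) * (Q ^ s * (1-Q) ^ (n-s)) := by ring
  have hdn : ∑ x ∈ (({x : Fin n → Fin d | L < eK P k x ∧ Tset k x = T} :
        Finset (Fin n → Fin d))).filter (fun x => ¬ r * (s:ℝ) ≤ (cntN x k : ℝ)), wgt P x
      ≤ exp (-L) * (Q ^ s * (1 - Q) ^ (n - s)) := by
    set Mm := (Finset.range (s+1)).filter
      (fun m => L < phi r s m ∧ ¬ r * (s:ℝ) ≤ (m:ℝ)) with hMm
    have hmem : ∀ x, x ∈ (({x : Fin n → Fin d | L < eK P k x ∧ Tset k x = T} :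
        Finset (Fin n → Fin d))).filter (fun x => ¬ r * (s:ℝ) ≤ (cntN x k : ℝ)) →
        Tset k x = T ∧ cntN x k ∈ Mm := by
      intro x hx
      rw [Finset.mem_filter] at hx
      obtain ⟨hx1, hx2⟩ := hx
      rw [Finset.mem_filter] at hx1
      obtain ⟨-, hx3, hx4⟩ := hx1
      rw [heK x hx4] at hx3
      refine ⟨hx4, ?_⟩
      rw [hMm, Finset.mem_filter, Finset.mem_range]
      exact ⟨Nat.lt_succ_of_le (hcnt_le x hx4), hx3, hx2⟩
    rcases Finset.eq_empty_or_nonempty Mm with hMe | hMne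
    · have hem : (({x : Fin n → Fin d | L < eK P k x ∧ Tset k x = T} :
          Finset (Fin n → Fin d))).filter (fun x => ¬ r * (s:ℝ) ≤ (cntN x k : ℝ)) = ∅ := by
        apply Finset.eq_empty_of_forall_notMem
        intro x hx
        have := (hmem x hx).2
        rw [hMe] at this
        exact absurd this (Finset.notMem_empty _)
      rw [hem, Finset.sum_empty]
      have : (0:ℝ) ≤ Q ^ s * (1 - Q) ^ (n - s) := by positivity
      positivity
    · obtain ⟨a, haMem, hamax⟩ := Finset.exists_max_image Mm id hMne
      simp only [id] at hamax
      rw [hMm, Finset.mem_filter, Finset.mem_range] at haMem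
      obtain ⟨haS', haphi, haR⟩ := haMem
      have haS : a ≤ s := by omega
      have haR' : (a:ℝ) < r * s := lt_of_not_ge haR
      obtain ⟨hBpos, hCpos⟩ := hdeg a haS haphi
      have hQpos : 0 < Q := by rw [hQBC]; linarith
      have hr0 : 0 < r := by rw [hrBQ]; positivity
      have hr1lt : r < 1 := by
        rw [hrBQ, div_lt_one hQpos, hQBC]; linarith
      have h1r : (0:ℝ) < 1 - r := by linarith
      have hBrQ : B = r * Q := by rw [hrBQ]; field_simp
      have hCrQ : C = (1 - r) * Q := by rw [hBrQ] at hQBC; linarith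
      have hspos : 0 < s := by
        by_contra h0
        have hss : s = 0 := by omega
        rw [hss] at haR'
        have h1 : (0:ℝ) ≤ (a:ℝ) := Nat.cast_nonneg a
        simp only [Nat.cast_zero, mul_zero] at haR'
        linarith
      have hsR : (0:ℝ) < s := by exact_mod_cast hspos
      have hsub1 : ∑ x ∈ (({x : Fin n → Fin d | L < eK P k x ∧ Tset k x = T} :
            Finset (Fin n → Fin d))).filter (fun x => ¬ r * (s:ℝ) ≤ (cntN x k : ℝ)), wgt P x
          ≤ ∑ x ∈ ({x : Fin n → Fin d | Tset k x = T ∧ cntN x k ≤ a} :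
            Finset (Fin n → Fin d)), wgt P x := by
        apply Finset.sum_le_sum_of_subset_of_nonneg
        · intro x hx
          have h := hmem x hx
          rw [Finset.mem_filter]
          exact ⟨Finset.mem_univ _, h.1, hamax _ h.2⟩
        · exact fun x _ _ => hwnn x
      refine le_trans hsub1 ?_
      rcases Nat.eq_zero_or_pos a with haZ | haPos
      · -- a = 0 : all of T maps strictly above k
        have hsevent : ({x : Fin n → Fin d | Tset k x = T ∧ cntN x k ≤ a} :
            Finset (Fin n → Fin d))
            = ({x : Fin n → Fin d | Tset k x = T ∧ ∀ j ∈ T, k+1 ≤ ((x j):ℕ)} :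
              Finset (Fin n → Fin d)) := by
          apply Finset.filter_congr
          intro x _
          constructor
          · rintro ⟨hTx, hax⟩
            refine ⟨hTx, fun j hj => ?_⟩
            have hc0 : cntN x k = 0 := by omega
            have hne := cntN_eq_zero.1 hc0 j
            rw [← hTx] at hj
            have := (Finset.mem_filter.1 hj).2
            omega
          · rintro ⟨hTx, hkx⟩
            refine ⟨hTx, ?_⟩
            have hc0 : cntN x k = 0 := by
              rw [cntN_eq_zero]
              intro j
              by_contra hjk
              have hjT : j ∈ Tset k x := by
                rw [Tset, Finset.mem_filter]
                refine ⟨Finset.mem_univ _, by omega⟩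
              rw [hTx] at hjT
              have := hkx j hjT
              omega
            omega
        rw [hsevent, groupTail hPsum k T]
        have hphib : phi r s 0 = -((s:ℝ) * log (1-r)) := phi_bot hr1lt hspos
        rw [haZ, hphib] at haphi
        have hrs : (1-r) ^ s ≤ exp (-L) := by
          have hre : (1-r) ^ s = exp ((s:ℝ) * log (1-r)) := by
            rw [Real.exp_nat_mul, exp_log h1r]
          rw [hre]
          apply exp_le_exp.2
          linarith
        calc Qe P (k+1) ^ T.card * (1 - Qe P k) ^ (n - T.card)
            = (1-r) ^ s * (Q ^ s * (1 - Q) ^ (n - s)) := by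
              rw [← hs, ← hC, ← hQ, hCrQ, mul_pow]; ring
          _ ≤ exp (-L) * (Q ^ s * (1 - Q) ^ (n - s)) := by
              apply mul_le_mul_of_nonneg_right hrs (by positivity)
      · -- 0 < a : genuine Chernoff, lower tail
        have ha0' : (0:ℝ) < a := by exact_mod_cast haPos
        have hprod : (0:ℝ) < (1 - r) * s := mul_pos h1r hsR
        have haLt' : (a:ℝ) < s := by nlinarith [haR', hprod]
        have haLt : a < s := by exact_mod_cast haLt'
        have hsa : (0:ℝ) < (s:ℝ) - a := by linarith
        set lam := log ((a:ℝ)*(1-r)/(((s:ℝ)-a)*r)) with hlam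
        have hlamneg : lam ≤ 0 := by
          apply log_nonpos (by positivity)
          rw [div_le_one (by positivity)]
          nlinarith [haR']
        have hstep1 : ∑ x ∈ ({x : Fin n → Fin d | Tset k x = T ∧ cntN x k ≤ a} :
              Finset (Fin n → Fin d)), wgt P x
            ≤ ∑ x ∈ ({x : Fin n → Fin d | Tset k x = T} : Finset (Fin n → Fin d)),
                (wgt P x * exp (lam * (cntN x k : ℝ))) * exp (-(lam * a)) := by
          have e1 : ∀ x ∈ ({x : Fin n → Fin d | Tset k x = T ∧ cntN x k ≤ a} :
              Finset (Fin n → Fin d)),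
              wgt P x ≤ (wgt P x * exp (lam * (cntN x k:ℝ))) * exp (-(lam * a)) := by
            intro x hx
            have hax : (cntN x k : ℝ) ≤ (a:ℝ) := by
              exact_mod_cast ((Finset.mem_filter.1 hx).2).2
            have hee : (1:ℝ) ≤ exp (lam * (cntN x k:ℝ)) * exp (-(lam*a)) := by
              rw [← exp_add]
              have hpr := mul_nonneg (neg_nonneg.2 hlamneg) (sub_nonneg.2 hax)
              calc (1:ℝ) = exp 0 := exp_zero.symm
                _ ≤ _ := exp_le_exp.2 (by nlinarith [hpr])
            calc wgt P x = wgt P x * 1 := (mul_one _).symm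
              _ ≤ _ := by
                  rw [mul_assoc]
                  exact mul_le_mul_of_nonneg_left hee (hwnn x)
          refine le_trans (Finset.sum_le_sum e1) ?_
          apply Finset.sum_le_sum_of_subset_of_nonneg
          · intro x hx
            rw [Finset.mem_filter] at hx ⊢
            exact ⟨hx.1, hx.2.1⟩
          · intro x _ _
            have h1 := hwnn x
            positivity
        rw [← Finset.sum_mul, groupW hPsum k T lam] at hstep1
        refine le_trans hstep1 ?_
        have hBC : Pe P k * exp lam + Qe P (k+1) = Q * (r * exp lam + (1 - r)) := by
          rw [← hB, ← hC, hBrQ, hCrQ]; ring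
        have hkey := chernoff_phi hr0 hr1lt haPos haLt haphi
        rw [← hlam] at hkey
        calc (Pe P k * exp lam + Qe P (k+1)) ^ T.card * (1 - Qe P k) ^ (n - T.card)
              * exp (-(lam * a))
            = (exp (-(lam * a)) * (r * exp lam + (1-r)) ^ s) * Q ^ s * (1-Q) ^ (n-s) := by
              rw [← hs, ← hQ, hBC, mul_pow]; ring
          _ ≤ (exp (-L) * Q ^ s) * (1-Q) ^ (n-s) := by
              apply mul_le_mul_of_nonneg_right _ (by positivity)
              exact mul_le_mul_of_nonneg_right hkey (by positivity)
          _ = exp (-L) * (Q ^ s * (1-Q) ^ (n-s)) := by ring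
  have := add_le_add hup hdn
  linarith

/-- the per-coordinate Chernoff bound -/
lemma perK {P : Fin d → ℝ} (hP : ∀ i, 0 ≤ P i) (hPsum : ∑ i, P i = 1) {L : ℝ} (hL : 0 < L)
    (k : ℕ) :
    ∑ x ∈ ({x : Fin n → Fin d | L < eK P k x} : Finset (Fin n → Fin d)), wgt P x
      ≤ 2 * exp (-L) := by
  have hfib := Finset.sum_fiberwise_of_maps_to (g := Tset k)
    (s := ({x : Fin n → Fin d | L < eK P k x} : Finset (Fin n → Fin d)))
    (t := (Finset.univ : Finset (Finset (Fin n))))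
    (fun x _ => Finset.mem_univ _) (wgt P)
  rw [← hfib]
  have hbinom : ∑ T : Finset (Fin n), Qe P k ^ T.card * (1 - Qe P k) ^ (n - T.card) = 1 := by
    have h := Finset.prod_add (fun _ : Fin n => Qe P k) (fun _ : Fin n => 1 - Qe P k)
      Finset.univ
    simp only [add_sub_cancel, Finset.prod_const, Finset.card_univ, Fintype.card_fin,
      one_pow, Finset.powerset_univ] at h
    calc ∑ T : Finset (Fin n), Qe P k ^ T.card * (1 - Qe P k) ^ (n - T.card)
        = ∑ T : Finset (Fin n), Qe P k ^ T.card * (1 - Qe P k) ^ (Finset.univ \ T).card := by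
          apply Finset.sum_congr rfl
          intro T _
          rw [Finset.card_sdiff_of_subset (Finset.subset_univ T), Finset.card_univ, Fintype.card_fin]
      _ = 1 := h.symm
  calc ∑ T : Finset (Fin n), ∑ x ∈ ({x : Fin n → Fin d | L < eK P k x} :
        Finset (Fin n → Fin d)).filter (fun x => Tset k x = T), wgt P x
      ≤ ∑ T : Finset (Fin n), 2 * exp (-L) * (Qe P k ^ T.card * (1 - Qe P k) ^ (n - T.card)) := by
        apply Finset.sum_le_sum
        intro T _
        have h := perT hP hPsum hL k T
        rw [Finset.filter_filter]
        exact h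
    _ = 2 * exp (-L) := by
        rw [← Finset.mul_sum, hbinom, mul_one]

/-- the chain rule for the multinomial KL divergence -/
lemma chain {P : Fin d → ℝ} (hP : ∀ i, 0 ≤ P i) (hPsum : ∑ i, P i = 1) (hd1 : 1 ≤ d)
    (hn : 0 < n) {x : Fin n → Fin d} (hx : wgt P x ≠ 0) :
    ∑ k ∈ Finset.range (d-1), eK P k x
      = ∑ i : Fin d, (cntN x (i:ℕ) : ℝ) * log ((cntN x (i:ℕ) : ℝ) / ((n:ℝ) * P i)) := by
  set c : ℕ → ℝ := fun i => (cntN x i : ℝ) * log ((cntN x i : ℝ) / Pe P i) with hc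
  set H : ℕ → ℝ := fun k => (scnt x k : ℝ) * log ((scnt x k : ℝ) / Qe P k) with hH
  have hcpos : ∀ k, cntN x k ≠ 0 → 0 < Pe P k := fun k hk => cntN_pos_P hP hx hk
  have hqpos : ∀ k, scnt x k ≠ 0 → 0 < Qe P k := fun k hk => Qe_pos_of_scnt hP hx hk
  have hstep : ∀ k, eK P k x = c k + (H (k+1) - H k) := by
    intro k
    have hms : scnt x k = cntN x k + scnt x (k+1) := scnt_succ x k
    have hQBC : Qe P k = Pe P k + Qe P (k+1) := Qe_succ P k
    rcases Nat.eq_zero_or_pos (cntN x k) with hm | hm <;>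
      rcases Nat.eq_zero_or_pos (scnt x (k+1)) with hs' | hs'
    · -- m = 0, s' = 0
      have hsk : scnt x k = 0 := by omega
      simp [eK, hc, hH, hm, hs', hsk]
    · -- m = 0, s' > 0
      have hsk : scnt x k = scnt x (k+1) := by omega
      have hC : 0 < Qe P (k+1) := hqpos (k+1) (by omega)
      have hQ : 0 < Qe P k := hqpos k (by omega)
      have hs'R : (0:ℝ) < (scnt x (k+1) : ℝ) := by exact_mod_cast hs'
      have h1r : 1 - rr P k = Qe P (k+1) / Qe P k := by
        rw [rr]
        field_simp
        linarith
      simp only [eK, hc, hH, hm, Nat.cast_zero, zero_mul, zero_add, div_zero, log_zero,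
        mul_zero, zero_sub, hsk]
      rw [h1r]
      have e1 : (scnt x (k+1) : ℝ) / ((scnt x (k+1) : ℝ) * (Qe P (k+1) / Qe P k))
          = Qe P k / Qe P (k+1) := by
        rw [eq_div_iff hC.ne']
        field_simp
        try ring
      rw [e1, log_div hQ.ne' hC.ne', log_div hs'R.ne' hC.ne', log_div hs'R.ne' hQ.ne']
      ring
    · -- m > 0, s' = 0
      have hsk : scnt x k = cntN x k := by omega
      have hB : 0 < Pe P k := hcpos k (by omega)
      have hQ : 0 < Qe P k := hqpos k (by omega)
      have hmR : (0:ℝ) < (cntN x k : ℝ) := by exact_mod_cast hm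
      have hQd : Qe P (k+1) = Qe P k - Pe P k := by linarith
      simp only [eK, hc, hH, hs', Nat.cast_zero, zero_mul, add_zero, hsk]
      have e1 : (cntN x k : ℝ) / ((cntN x k : ℝ) * rr P k) = Qe P k / Pe P k := by
        rw [rr]
        field_simp
      rw [e1, log_div hQ.ne' hB.ne', log_div hmR.ne' hB.ne', log_div hmR.ne' hQ.ne']
      ring
    · -- m > 0, s' > 0
      have hB : 0 < Pe P k := hcpos k (by omega)
      have hC : 0 < Qe P (k+1) := hqpos (k+1) (by omega)
      have hQ : 0 < Qe P k := hqpos k (by omega)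
      have hmR : (0:ℝ) < (cntN x k : ℝ) := by exact_mod_cast hm
      have hs'R : (0:ℝ) < (scnt x (k+1) : ℝ) := by exact_mod_cast hs'
      have hskR : (scnt x k : ℝ) = (cntN x k : ℝ) + (scnt x (k+1) : ℝ) := by
        exact_mod_cast congrArg (Nat.cast (R := ℝ)) hms
      have hskpos : (0:ℝ) < (scnt x k : ℝ) := by rw [hskR]; linarith
      have h1r : 1 - rr P k = Qe P (k+1) / Qe P k := by
        rw [rr]
        field_simp
        linarith
      simp only [eK, hc, hH]
      rw [h1r, rr]
      have e1 : (cntN x k : ℝ) / ((scnt x k : ℝ) * (Pe P k / Qe P k))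
          = (cntN x k : ℝ) * Qe P k / ((scnt x k : ℝ) * Pe P k) := by
        field_simp
        try ring
      have e2 : (scnt x (k+1) : ℝ) / ((scnt x k : ℝ) * (Qe P (k+1) / Qe P k))
          = (scnt x (k+1) : ℝ) * Qe P k / ((scnt x k : ℝ) * Qe P (k+1)) := by
        field_simp
        try ring
      rw [e1, e2,
        log_div (by positivity) (by positivity), log_div (by positivity) (by positivity),
        log_mul hmR.ne' hQ.ne', log_mul hskpos.ne' hB.ne',
        log_mul hs'R.ne' hQ.ne', log_mul hskpos.ne' hC.ne',
        log_div hmR.ne' hB.ne', log_div hs'R.ne' hC.ne', log_div hskpos.ne' hQ.ne']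
      rw [hskR]
      ring
  rw [Finset.sum_congr rfl (fun k _ => hstep k), Finset.sum_add_distrib,
    Finset.sum_range_sub H]
  have hHd : H (d-1) = c (d-1) := by
    have h1 : scnt x (d-1) = cntN x (d-1) := by
      have := scnt_succ x (d-1)
      have h2 : scnt x (d-1+1) = 0 := scnt_top x (by omega)
      omega
    have h2 : Qe P (d-1) = Pe P (d-1) := by
      have := Qe_succ P (d-1)
      have h3 : Qe P (d-1+1) = 0 := by
        rw [Qe]
        have : Finset.Ico (d-1+1) d = ∅ := Finset.Ico_eq_empty (by omega)
        rw [this, Finset.sum_empty]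
      linarith
    simp only [hH, hc]
    rw [h1, h2]
  have hH0 : H 0 = (n:ℝ) * log (n:ℝ) := by
    rw [hH]
    simp only [scnt_zero, Qe_zero hPsum, div_one]
  rw [hHd, hH0]
  have hsum : ∑ k ∈ Finset.range (d-1), c k + c (d-1) = ∑ k ∈ Finset.range d, c k := by
    rw [← Finset.sum_range_succ c (d-1), Nat.sub_add_cancel hd1]
  have hRHS : ∑ i : Fin d, (cntN x (i:ℕ) : ℝ) * log ((cntN x (i:ℕ) : ℝ) / ((n:ℝ) * P i))
      = ∑ k ∈ Finset.range d, (cntN x k : ℝ) * log ((cntN x k : ℝ) / ((n:ℝ) * Pe P k)) := by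
    rw [← Fin.sum_univ_eq_sum_range (fun k => (cntN x k : ℝ) *
      log ((cntN x k : ℝ) / ((n:ℝ) * Pe P k))) d]
    apply Finset.sum_congr rfl
    intro i _
    rw [Pe_coe]
  rw [hRHS]
  have hterm : ∀ k ∈ Finset.range d, (cntN x k : ℝ) * log ((cntN x k : ℝ) / ((n:ℝ) * Pe P k))
      = c k - (cntN x k : ℝ) * log (n:ℝ) := by
    intro k _
    rcases Nat.eq_zero_or_pos (cntN x k) with hm | hm
    · simp [hc, hm]
    · have hB : 0 < Pe P k := hcpos k (by omega)
      have hmR : (0:ℝ) < (cntN x k : ℝ) := by exact_mod_cast hm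
      have hnR : (0:ℝ) < (n:ℝ) := by exact_mod_cast hn
      have e1 : (cntN x k : ℝ) / ((n:ℝ) * Pe P k)
          = ((cntN x k : ℝ) / Pe P k) / (n:ℝ) := by
        rw [mul_comm]
        exact (div_div _ _ _).symm
      rw [hc, e1, log_div (by positivity) hnR.ne']
      ring
  rw [Finset.sum_congr rfl hterm, Finset.sum_sub_distrib, ← Finset.sum_mul]
  have hcnt : ∑ k ∈ Finset.range d, (cntN x k : ℝ) = (n:ℝ) := by
    rw [← Nat.cast_sum, sum_cntN]
  rw [hcnt]
  linarith [hsum]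

/-- the empirical KL divergence, real-valued -/
noncomputable def Kreal (P : Fin d → ℝ) (x : Fin n → Fin d) : ℝ :=
  ∑ i : Fin d, ((cntN x (i:ℕ) : ℝ)/(n:ℝ)) * log ((((cntN x (i:ℕ) : ℝ))/(n:ℝ)) / P i)

lemma nK {P : Fin d → ℝ} (hn : 0 < n) (x : Fin n → Fin d) :
    (n:ℝ) * Kreal P x
      = ∑ i : Fin d, (cntN x (i:ℕ) : ℝ) * log ((cntN x (i:ℕ) : ℝ) / ((n:ℝ) * P i)) := by
  have hnR : (0:ℝ) < n := by exact_mod_cast hn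
  rw [Kreal, Finset.mul_sum]
  apply Finset.sum_congr rfl
  intro i _
  rw [div_div]
  field_simp

lemma failure_sum_le {P : Fin d → ℝ} (hP : ∀ i, 0 ≤ P i) (hPsum : ∑ i, P i = 1)
    (hn : 0 < n) (hd1 : 1 ≤ d) (L ε : ℝ) (hL2 : 2 ≤ d → 0 < L)
    (hε : ε = ((d:ℝ)-1)/(n:ℝ) * L) :
    ∑ x ∈ ({x : Fin n → Fin d | ε < Kreal P x ∧ wgt P x ≠ 0} : Finset (Fin n → Fin d)),
      wgt P x ≤ ((d - 1 : ℕ):ℝ) * (2 * exp (-L)) := by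
  have hnR : (0:ℝ) < n := by exact_mod_cast hn
  have hdcast : ((d - 1 : ℕ):ℝ) = (d:ℝ) - 1 := by
    rw [Nat.cast_sub hd1, Nat.cast_one]
  have hpig : ∀ x : Fin n → Fin d, ε < Kreal P x → wgt P x ≠ 0 →
      ∃ k ∈ Finset.range (d-1), L < eK P k x := by
    intro x hKx hwx
    by_contra hcon
    push_neg at hcon
    have hsum : ∑ k ∈ Finset.range (d-1), eK P k x ≤ ((d-1 : ℕ):ℝ) * L := by
      calc ∑ k ∈ Finset.range (d-1), eK P k x ≤ ∑ _k ∈ Finset.range (d-1), L :=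
            Finset.sum_le_sum hcon
        _ = ((d-1:ℕ):ℝ) * L := by
            rw [Finset.sum_const, Finset.card_range, nsmul_eq_mul]
    rw [chain hP hPsum hd1 hn hwx, ← nK hn x] at hsum
    have hKle : Kreal P x ≤ ε := by
      rw [hdcast] at hsum
      rw [hε, div_mul_eq_mul_div, le_div_iff₀ hnR]
      linarith
    linarith
  rcases Nat.lt_or_ge d 2 with hd2 | hd2
  · have hem : ({x : Fin n → Fin d | ε < Kreal P x ∧ wgt P x ≠ 0} :
        Finset (Fin n → Fin d)) = ∅ := by
      apply Finset.eq_empty_of_forall_notMem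
      intro x hx
      rw [Finset.mem_filter] at hx
      obtain ⟨k, hk, -⟩ := hpig x hx.2.1 hx.2.2
      rw [Finset.mem_range] at hk
      omega
    rw [hem, Finset.sum_empty]
    positivity
  · have hL := hL2 hd2
    have hP0 : ∀ x : Fin n → Fin d, 0 ≤ wgt P x := wgt_nonneg hP
    calc ∑ x ∈ ({x : Fin n → Fin d | ε < Kreal P x ∧ wgt P x ≠ 0} :
          Finset (Fin n → Fin d)), wgt P x
        ≤ ∑ x ∈ ({x : Fin n → Fin d | ε < Kreal P x ∧ wgt P x ≠ 0} :
            Finset (Fin n → Fin d)),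
            (∑ k ∈ Finset.range (d-1), if L < eK P k x then wgt P x else 0) := by
          apply Finset.sum_le_sum
          intro x hx
          rw [Finset.mem_filter] at hx
          obtain ⟨k, hk, hke⟩ := hpig x hx.2.1 hx.2.2
          have h1 := Finset.single_le_sum
            (f := fun k => if L < eK P k x then wgt P x else 0)
            (fun kk _ => by
              by_cases h : L < eK P kk x
              · rw [if_pos h]; exact hP0 x
              · rw [if_neg h]) hk
          rw [if_pos hke] at h1
          exact h1
      _ = ∑ k ∈ Finset.range (d-1), ∑ x ∈ ({x : Fin n → Fin d | ε < Kreal P x ∧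
            wgt P x ≠ 0} : Finset (Fin n → Fin d)), (if L < eK P k x then wgt P x else 0) :=
          Finset.sum_comm
      _ ≤ ∑ _k ∈ Finset.range (d-1), 2 * exp (-L) := by
          apply Finset.sum_le_sum
          intro k _
          calc ∑ x ∈ ({x : Fin n → Fin d | ε < Kreal P x ∧ wgt P x ≠ 0} :
                Finset (Fin n → Fin d)), (if L < eK P k x then wgt P x else 0)
              ≤ ∑ x : Fin n → Fin d, (if L < eK P k x then wgt P x else 0) := by
                apply Finset.sum_le_sum_of_subset_of_nonneg (Finset.filter_subset _ _)
                intro x _ _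
                by_cases h : L < eK P k x
                · rw [if_pos h]; exact hP0 x
                · rw [if_neg h]
            _ = ∑ x ∈ ({x : Fin n → Fin d | L < eK P k x} : Finset (Fin n → Fin d)),
                  wgt P x := (Finset.sum_filter _ _).symm
            _ ≤ 2 * exp (-L) := perK hP hPsum hL k
      _ = ((d-1:ℕ):ℝ) * (2 * exp (-L)) := by
          rw [Finset.sum_const, Finset.card_range, nsmul_eq_mul]

end MCS

set_option maxHeartbeats 1000000 in
/-- **Multinomial KL confidence set.**
Let `P ∈ P^d` be a probability vector, `p̂` the empirical distribution of `n` i.i.d.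
categorical samples from `P`, and suppose `d ≤ (n·C₀/4)^{1/3}` with `C₀ = e³/(2π)`.  For any
`γ ∈ (0,1)`, the confidence set
`C(p̂) = {u ∈ P^d : KL(p̂ ‖ u) ≤ ((d−1)/n)·log(2(d−1)/(1−γ))}` satisfies
`ℙ(P ∈ C(p̂)) ≥ γ`. -/
theorem multinomial_confidence_set
    {Ω : Type*} [MeasurableSpace Ω] (μ : Measure Ω) [IsProbabilityMeasure μ]
    (d n : ℕ) (hn : 0 < n)
    -- `P` is in the simplex `P^d`
    (P : Fin d → ℝ) (hP01 : ∀ i, P i ∈ Set.Icc (0 : ℝ) 1) (hPsum : ∑ i, P i = 1)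
    -- i.i.d. categorical samples with distribution `P`
    (X : Fin n → Ω → Fin d) (hXmeas : ∀ j, Measurable (X j))
    (hindep : iIndepFun X μ)
    (hlaw : ∀ j i, μ {ω | X j ω = i} = ENNReal.ofReal (P i))
    -- the dimension condition `d ≤ (n·C₀/4)^{1/3}` with `C₀ = e³/(2π)`
    (hd : (d : ℝ) ≤ ((n : ℝ) * (Real.exp 3 / (2 * Real.pi)) / 4) ^ ((1 : ℝ) / 3))
    (γ : ℝ) (hγ : γ ∈ Set.Ioo (0 : ℝ) 1) :
    ENNReal.ofReal γ ≤
      μ {ω | P ∈ {u : Fin d → ℝ | (∀ i, u i ∈ Set.Icc (0 : ℝ) 1) ∧ ∑ i, u i = 1 ∧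
          multiKL (empDist X ω) u ≤
            ENNReal.ofReal ((((d : ℝ) - 1) / n) * Real.log (2 * ((d : ℝ) - 1) / (1 - γ)))}} := by
  classical
  obtain ⟨hγ0, hγ1⟩ := hγ
  have hP0 : ∀ i, 0 ≤ P i := fun i => (hP01 i).1
  have hd1 : 1 ≤ d := by
    by_contra h
    have hd0 : d = 0 := by omega
    subst hd0
    simp at hPsum
  set L : ℝ := Real.log (2 * ((d:ℝ) - 1) / (1 - γ)) with hLdef
  set ε : ℝ := (((d:ℝ) - 1) / n) * L with hεdef
  set G : (Fin n → Fin d) → Prop :=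
    fun x => multiKL (fun i : Fin d => (MCS.cntN x (i:ℕ) : ℝ)/(n:ℝ)) P ≤ ENNReal.ofReal ε with hG
  have hEv : {ω | P ∈ {u : Fin d → ℝ | (∀ i, u i ∈ Set.Icc (0 : ℝ) 1) ∧ ∑ i, u i = 1 ∧
          multiKL (empDist X ω) u ≤ ENNReal.ofReal ε}}
      = {ω | G (fun j => X j ω)} := by
    ext ω
    simp only [Set.mem_setOf_eq, hG]
    have hemp : empDist X ω = fun i : Fin d => (MCS.cntN (fun j => X j ω) (i:ℕ) : ℝ)/(n:ℝ) := by
      funext i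
      rw [empDist, MCS.cntN]
      congr 3
      apply Finset.filter_congr
      intro j _
      constructor
      · intro h; rw [h]
      · intro h; exact Fin.ext h
    rw [hemp]
    constructor
    · rintro ⟨-, -, h⟩; exact h
    · intro h; exact ⟨hP01, hPsum, h⟩
  rw [hEv]
  set Fail := ({x : Fin n → Fin d | ¬ G x} : Finset (Fin n → Fin d)) with hFail
  have hatom : ∀ x : Fin n → Fin d,
      μ {ω | ∀ j, X j ω = x j} = ∏ j, ENNReal.ofReal (P (x j)) := by
    intro x
    have h1 : {ω | ∀ j, X j ω = x j} = ⋂ j, (X j) ⁻¹' {x j} := by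
      ext ω
      simp [Set.mem_iInter, Set.mem_preimage]
    rw [h1, hindep.meas_iInter fun j => ⟨{x j}, measurableSet_singleton _, rfl⟩]
    exact Finset.prod_congr rfl fun j _ => hlaw j (x j)
  -- the real bound
  have hreal : ∑ x ∈ Fail, MCS.wgt P x ≤ 1 - γ := by
    have h1 : ∑ x ∈ Fail.filter (fun x => MCS.wgt P x ≠ 0), MCS.wgt P x
        = ∑ x ∈ Fail, MCS.wgt P x := Finset.sum_filter_ne_zero Fail
    rw [← h1]
    have h2 : Fail.filter (fun x => MCS.wgt P x ≠ 0)
        ⊆ ({x : Fin n → Fin d | ε < MCS.Kreal P x ∧ MCS.wgt P x ≠ 0} :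
          Finset (Fin n → Fin d)) := by
      intro x hx
      rw [Finset.mem_filter] at hx
      obtain ⟨hxF, hw⟩ := hx
      rw [hFail, Finset.mem_filter] at hxF
      have hnG := hxF.2
      rw [Finset.mem_filter]
      refine ⟨Finset.mem_univ _, ?_, hw⟩
      simp only [hG] at hnG
      have hno : ¬ ∃ i : Fin d, 0 < ((MCS.cntN x (i:ℕ) : ℝ)/(n:ℝ)) ∧ P i = 0 := by
        rintro ⟨i, hpos, hPi⟩
        have hc0 : MCS.cntN x (i:ℕ) ≠ 0 := by
          intro h0
          rw [h0] at hpos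
          simp at hpos
        have := MCS.wgt_pos_P hP0 hw hc0
        linarith
      have hMK : multiKL (fun i : Fin d => (MCS.cntN x (i:ℕ) : ℝ)/(n:ℝ)) P
          = ENNReal.ofReal (MCS.Kreal P x) := if_neg hno
      rw [hMK] at hnG
      by_contra hKle
      push_neg at hKle
      exact hnG (ENNReal.ofReal_le_ofReal hKle)
    have h3 : ∑ x ∈ Fail.filter (fun x => MCS.wgt P x ≠ 0), MCS.wgt P x
        ≤ ∑ x ∈ ({x : Fin n → Fin d | ε < MCS.Kreal P x ∧ MCS.wgt P x ≠ 0} :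
          Finset (Fin n → Fin d)), MCS.wgt P x :=
      Finset.sum_le_sum_of_subset_of_nonneg h2 (fun x _ _ => MCS.wgt_nonneg hP0 x)
    have hL2 : 2 ≤ d → 0 < L := by
      intro hd2
      rw [hLdef]
      apply Real.log_pos
      have hdR : (2:ℝ) ≤ (d:ℝ) := by exact_mod_cast hd2
      rw [lt_div_iff₀ (by linarith)]
      linarith
    have h4 := MCS.failure_sum_le hP0 hPsum hn hd1 L ε hL2 hεdef
    rcases Nat.lt_or_ge d 2 with hd2 | hd2
    · have : d - 1 = 0 := by omega
      rw [this] at h4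
      simp only [Nat.cast_zero, zero_mul] at h4
      linarith [h3, h4]
    · have hdR : (2:ℝ) ≤ (d:ℝ) := by exact_mod_cast hd2
      have hdm1 : (0:ℝ) < (d:ℝ) - 1 := by linarith
      have h1γ : (0:ℝ) < 1 - γ := by linarith
      have hargpos : (0:ℝ) < 2 * ((d:ℝ) - 1) / (1 - γ) := by positivity
      have hexp : Real.exp (-L) = (1 - γ) / (2 * ((d:ℝ) - 1)) := by
        rw [hLdef, Real.exp_neg, Real.exp_log hargpos]
        rw [inv_div]
      have h5 : ((d - 1 : ℕ):ℝ) * (2 * Real.exp (-L)) = 1 - γ := by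
        rw [hexp, Nat.cast_sub hd1, Nat.cast_one]
        field_simp
      linarith [h3, h4]
  have hbad : μ {ω | ¬ G (fun j => X j ω)} ≤ ENNReal.ofReal (1 - γ) := by
    have hsub : {ω | ¬ G (fun j => X j ω)} ⊆ ⋃ x ∈ Fail, {ω | ∀ j, X j ω = x j} := by
      intro ω hω
      simp only [Set.mem_iUnion]
      refine ⟨fun j => X j ω, ?_, fun j => rfl⟩
      rw [hFail, Finset.mem_filter]
      exact ⟨Finset.mem_univ _, hω⟩
    calc μ {ω | ¬ G (fun j => X j ω)}
        ≤ ∑ x ∈ Fail, μ {ω | ∀ j, X j ω = x j} :=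
          (measure_mono hsub).trans (measure_biUnion_finset_le Fail _)
      _ = ∑ x ∈ Fail, ENNReal.ofReal (MCS.wgt P x) := by
          apply Finset.sum_congr rfl
          intro x _
          rw [hatom x, ← ENNReal.ofReal_prod_of_nonneg (fun j _ => hP0 (x j))]
          rfl
      _ = ENNReal.ofReal (∑ x ∈ Fail, MCS.wgt P x) :=
          (ENNReal.ofReal_sum_of_nonneg (fun x _ => MCS.wgt_nonneg hP0 x)).symm
      _ ≤ ENNReal.ofReal (1 - γ) := ENNReal.ofReal_le_ofReal hreal
  have h5 : (1:ENNReal) ≤ μ {ω | G (fun j => X j ω)} + μ {ω | ¬ G (fun j => X j ω)} := by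
    rw [← measure_univ (μ := μ)]
    refine le_trans (measure_mono ?_) (measure_union_le _ _)
    intro ω _
    by_cases h : G (fun j => X j ω)
    · exact Or.inl h
    · exact Or.inr h
  calc ENNReal.ofReal γ = 1 - ENNReal.ofReal (1 - γ) := by
        rw [← ENNReal.ofReal_one, ← ENNReal.ofReal_sub _ (by linarith : (0:ℝ) ≤ 1-γ)]
        congr 1
        ring
    _ ≤ μ {ω | G (fun j => X j ω)} := by
        rw [tsub_le_iff_right]
        exact le_trans h5 (add_le_add le_rfl hbad)
end
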